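/- arXiv:cs/0001026 — 2 statements merged into one kernel-verified Lean document; each statement's English description precedes it below -/
import Mathlib

section
/- Corollary 5.3: For every world w, all x, y ∈ K ∪ G ∪ N, and every principal expression p: the minimal Herbrand model M_w of Σ_w satisfies τ_{x,y}(p) if and only if x, y ∈ K and w,x ⊨_c p ▷ y. -/
/-- Principal expressions over keys `K`, global names `G`, local names `N`. -/
inductive PExp (K G N : Type*) where
  | key : K → PExp K G N
  | glob : G → PExp K G N
  | loc : N → PExp K G N
  | s : PExp K G N → PExp K G N → PExp K G N

/-- Formulas of LLNC. -/
inductive Fml (K G N : Type*) where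
  | bdto : PExp K G N → PExp K G N → Fml K G N
  | cert : K → Fml K G N → Fml K G N
  | not : Fml K G N → Fml K G N
  | and : Fml K G N → Fml K G N → Fml K G N

/-- A world: an interpretation of global names and an assignment of
certificates to keys, with only finitely many certificates issued. -/
structure World (K G N : Type*) where
  beta : G → Set K
  certs : K → Set (Fml K G N)
  finite_certs : (⋃ k, certs k).Finite

variable {K G N : Type*}

/-- The interpretation of a principal expression relative to a world, a
local name assignment, and a key. -/
def interp (w : World K G N) (l : K → N → Set K) : PExp K G N → K → Set K
  | .key k', _ => {k'}
  | .glob g, _ => w.beta g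
  | .loc n, k => l k n
  | .s p q, k => ⋃ k' ∈ interp w l p k, interp w l q k'

/-- Satisfaction of a formula at a world, local name assignment, and key. -/
def Sat (w : World K G N) (l : K → N → Set K) (k : K) : Fml K G N → Prop
  | .bdto p q => interp w l q k ⊆ interp w l p k
  | .cert k' φ => φ ∈ w.certs k'
  | .not φ => ¬ Sat w l k φ
  | .and φ ψ => Sat w l k φ ∧ Sat w l k ψ

/-- A local name assignment is consistent with a world if every issued
binding certificate holds at the issuer. -/
def Consistent (w : World K G N) (l : K → N → Set K) : Prop :=
  ∀ (k : K) (n : N) (p : PExp K G N),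
    Fml.bdto (.loc n) p ∈ w.certs k → Sat w l k (.bdto (.loc n) p)

/-- The Herbrand domain: the constants `K ∪ G ∪ N`. -/
abbrev Dom (K G N : Type*) := K ⊕ (G ⊕ N)

/-- The constant for a key. -/
def dkey (k : K) : Dom K G N := Sum.inl k

/-- The constant for a global name. -/
def dglob (g : G) : Dom K G N := Sum.inr (Sum.inl g)

/-- The constant for a local name. -/
def dloc (n : N) : Dom K G N := Sum.inr (Sum.inr n)

/-- A Herbrand structure over the vocabulary `V`, identified with the set of
tuples of the ternary predicate `name` that it satisfies. -/
abbrev Herbrand (K G N : Type*) := Set (Dom K G N × Dom K G N × Dom K G N)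

/-- Satisfaction of the translated formula `τ_{x,y}(p)` in a Herbrand
structure `M`. -/
def tauSat (M : Herbrand K G N) : PExp K G N → Dom K G N → Dom K G N → Prop
  | .key k, x, y => (x, dkey k, y) ∈ M
  | .glob g, x, y => (x, dglob g, y) ∈ M
  | .loc n, x, y => (x, dloc n, y) ∈ M
  | .s q r, x, y => ∃ z : Dom K G N, tauSat M q x z ∧ tauSat M r z y

/-- `M` represents the world `w` and the local name assignment `l`. -/
def Represents (M : Herbrand K G N) (w : World K G N) (l : K → N → Set K) : Prop :=
  ∀ x y z : Dom K G N, (x, y, z) ∈ M ↔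
    ((∃ k₁ k₂ : K, x = dkey k₁ ∧ y = dkey k₂ ∧ z = dkey k₂) ∨
     (∃ (k₁ : K) (g : G) (k₂ : K), x = dkey k₁ ∧ y = dglob g ∧ z = dkey k₂ ∧ k₂ ∈ w.beta g) ∨
     (∃ (k₁ : K) (n : N) (k₂ : K), x = dkey k₁ ∧ y = dloc n ∧ z = dkey k₂ ∧ k₂ ∈ l k₁ n))

/-- `lw` is the (unique) minimal local name assignment consistent with `w`. -/
def IsMinConsistent (w : World K G N) (lw : K → N → Set K) : Prop :=
  Consistent w lw ∧ ∀ l, Consistent w l → ∀ (k : K) (n : N), lw k n ⊆ l k n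

/-- `M` is a Herbrand model of the definite Horn theory `Σ_w`. -/
def SigmaModel (w : World K G N) (M : Herbrand K G N) : Prop :=
  (∀ k₁ k₂ : K, (dkey k₁, dkey k₂, dkey k₂) ∈ M) ∧
  (∀ (k₁ k₂ : K) (g : G), k₂ ∈ w.beta g → (dkey k₁, dglob g, dkey k₂) ∈ M) ∧
  (∀ (k : K) (n : N) (q : PExp K G N), Fml.bdto (.loc n) q ∈ w.certs k →
    ∀ y : Dom K G N, tauSat M q (dkey k) y → (dkey k, dloc n, y) ∈ M)

/-- `M` is the minimal Herbrand model of `Σ_w` (with respect to containment). -/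
def IsMinModel (w : World K G N) (M : Herbrand K G N) : Prop :=
  SigmaModel w M ∧ ∀ M' : Herbrand K G N, SigmaModel w M' → M ⊆ M'


section Aux

variable {K G N : Type*}

/-- The canonical Herbrand structure representing `w` and `l`. -/
def canonM (w : World K G N) (l : K → N → Set K) : Herbrand K G N :=
  {t | (∃ k₁ k₂ : K, t = (dkey k₁, dkey k₂, dkey k₂)) ∨
       (∃ (k₁ : K) (g : G) (k₂ : K), t = (dkey k₁, dglob g, dkey k₂) ∧ k₂ ∈ w.beta g) ∨
       (∃ (k₁ : K) (n : N) (k₂ : K), t = (dkey k₁, dloc n, dkey k₂) ∧ k₂ ∈ l k₁ n)}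

lemma tauSat_mono {M M' : Herbrand K G N} (h : M ⊆ M') :
    ∀ (p : PExp K G N) (x y : Dom K G N), tauSat M p x y → tauSat M' p x y := by
  intro p
  induction p with
  | key k => exact fun x y hx => h hx
  | glob g => exact fun x y hx => h hx
  | loc n => exact fun x y hx => h hx
  | s q r ihq ihr =>
    rintro x y ⟨z, hq, hr⟩
    exact ⟨z, ihq _ _ hq, ihr _ _ hr⟩

lemma interp_mono (w : World K G N) {l l' : K → N → Set K}
    (h : ∀ k n, l k n ⊆ l' k n) :
    ∀ (p : PExp K G N) (k : K), interp w l p k ⊆ interp w l' p k := by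
  intro p
  induction p with
  | key k' => exact fun k => subset_rfl
  | glob g => exact fun k => subset_rfl
  | loc n => exact fun k => h k n
  | s q r ihq ihr =>
    intro k x hx
    simp only [interp, Set.mem_iUnion] at hx ⊢
    obtain ⟨k', hk', hx⟩ := hx
    exact ⟨k', ihq k hk', ihr k' hx⟩

lemma tauSat_canon (w : World K G N) (l : K → N → Set K) :
    ∀ (p : PExp K G N) (x y : Dom K G N), tauSat (canonM w l) p x y ↔
      ∃ kx ky : K, x = dkey kx ∧ y = dkey ky ∧ ky ∈ interp w l p kx := by
  intro p
  induction p with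
  | key k =>
    intro x y
    simp only [tauSat, canonM, Set.mem_setOf_eq, interp, Set.mem_singleton_iff,
      dkey, dglob, dloc, Prod.mk.injEq]
    aesop
  | glob g =>
    intro x y
    simp only [tauSat, canonM, Set.mem_setOf_eq, interp,
      dkey, dglob, dloc, Prod.mk.injEq]
    aesop
  | loc n =>
    intro x y
    simp only [tauSat, canonM, Set.mem_setOf_eq, interp,
      dkey, dglob, dloc, Prod.mk.injEq]
    aesop
  | s q r ihq ihr =>
    intro x y
    simp only [tauSat, interp, Set.mem_iUnion]
    constructor
    · rintro ⟨z, hq, hr⟩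
      obtain ⟨kx, kz, rfl, rfl, h1⟩ := (ihq x z).1 hq
      obtain ⟨kz', ky, hz, rfl, h2⟩ := (ihr _ y).1 hr
      obtain rfl : kz = kz' := by simpa [dkey] using hz
      exact ⟨kx, ky, rfl, rfl, kz, h1, h2⟩
    · rintro ⟨kx, ky, rfl, rfl, kz, h1, h2⟩
      exact ⟨dkey kz, (ihq _ _).2 ⟨kx, kz, rfl, rfl, h1⟩,
        (ihr _ _).2 ⟨kz, ky, rfl, rfl, h2⟩⟩

lemma canon_sigmaModel (w : World K G N) {lw : K → N → Set K}
    (hcons : Consistent w lw) : SigmaModel w (canonM w lw) := by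
  refine ⟨fun k₁ k₂ => Or.inl ⟨k₁, k₂, rfl⟩,
    fun k₁ k₂ g h => Or.inr (Or.inl ⟨k₁, g, k₂, rfl, h⟩), ?_⟩
  intro k n q hq y hy
  obtain ⟨kx, ky, hx, rfl, hky⟩ := (tauSat_canon w lw q _ y).1 hy
  obtain rfl : k = kx := by simpa [dkey] using hx
  exact Or.inr (Or.inr ⟨k, n, ky, rfl, hcons k n q hq hky⟩)

end Aux

/-- Corollary 5.3: the minimal Herbrand model of `Σ_w` satisfies
`τ_{x,y}(p)` iff `x` and `y` are keys and `w,x ⊨_c p ▷ y`. -/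
theorem min_herbrand_tau [Nonempty K] (w : World K G N)
    (M : Herbrand K G N) (hM : IsMinModel w M)
    (lw : K → N → Set K) (hlw : IsMinConsistent w lw)
    (x y : Dom K G N) (p : PExp K G N) :
    tauSat M p x y ↔ ∃ kx ky : K, x = dkey kx ∧ y = dkey ky ∧
      Sat w lw kx (.bdto p (.key ky)) := by
  obtain ⟨hSig, hmin⟩ := hM
  obtain ⟨hcons, hlmin⟩ := hlw
  have hsub : M ⊆ canonM w lw := hmin _ (canon_sigmaModel w hcons)
  set l' : K → N → Set K := fun k n => {k' | (dkey k, dloc n, dkey k') ∈ M} with hl'def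
  have fwd : ∀ (q : PExp K G N) (kx ky : K), ky ∈ interp w l' q kx →
      tauSat M q (dkey kx) (dkey ky) := by
    intro q
    induction q with
    | key k =>
      intro kx ky h
      simp only [interp, Set.mem_singleton_iff] at h
      subst h
      exact hSig.1 kx ky
    | glob g => exact fun kx ky h => hSig.2.1 kx ky g h
    | loc n => exact fun kx ky h => h
    | s q r ihq ihr =>
      intro kx ky h
      simp only [interp, Set.mem_iUnion] at h
      obtain ⟨k', h1, h2⟩ := h
      exact ⟨dkey k', ihq _ _ h1, ihr _ _ h2⟩
  have hl' : Consistent w l' := by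
    intro k n q hq ky hky
    exact hSig.2.2 k n q hq (dkey ky) (fwd q k ky hky)
  have hsub' : ∀ k n, lw k n ⊆ l' k n := hlmin l' hl'
  constructor
  · intro h
    obtain ⟨kx, ky, rfl, rfl, hky⟩ :=
      (tauSat_canon w lw p x y).1 (tauSat_mono hsub p x y h)
    refine ⟨kx, ky, rfl, rfl, ?_⟩
    intro z hz
    simp only [interp, Set.mem_singleton_iff] at hz
    subst hz
    exact hky
  · rintro ⟨kx, ky, rfl, rfl, hsat⟩
    have hky : ky ∈ interp w lw p kx := hsat (by simp [interp])
    exact fwd p kx ky (interp_mono w hsub' p kx hky)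
end

section
/- Theorem 6.1: In the language LLNC^self obtained by adding the basic principal expression self (interpreted by ⟦self⟧_{w,l,k} = {k}), the axiom system AX_inf^self is sound and complete with respect to the open semantics if K is infinite, and AX_fin^self is sound and complete with respect to the open semantics if K is finite: a formula φ of LLNC^self is provable in the respective system if and only if φ is o-valid. -/
/-- Principal expressions of LLNC^self: keys, global names, local names,
`self`, and linking `'s`. -/
inductive PExpS (K G N : Type*) where
  | key : K → PExpS K G N
  | glob : G → PExpS K G N
  | loc : N → PExpS K G N
  | self : PExpS K G N
  | s : PExpS K G N → PExpS K G N → PExpS K G N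

/-- Formulas of LLNC^self. -/
inductive FmlS (K G N : Type*) where
  | bdto : PExpS K G N → PExpS K G N → FmlS K G N
  | cert : K → FmlS K G N → FmlS K G N
  | not : FmlS K G N → FmlS K G N
  | and : FmlS K G N → FmlS K G N → FmlS K G N

/-- A world: an interpretation of global names and an assignment of
certificates to keys, with only finitely many certificates issued. -/
structure WorldS (K G N : Type*) where
  beta : G → Set K
  certs : K → Set (FmlS K G N)
  finite_certs : (⋃ k, certs k).Finite

variable {K G N : Type*}

/-- The interpretation of a principal expression, with `⟦self⟧_{w,l,k} = {k}`. -/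
def interpS (w : WorldS K G N) (l : K → N → Set K) : PExpS K G N → K → Set K
  | .key k', _ => {k'}
  | .glob g, _ => w.beta g
  | .loc n, k => l k n
  | .self, k => {k}
  | .s p q, k => ⋃ k' ∈ interpS w l p k, interpS w l q k'

/-- Satisfaction of a formula at a world, local name assignment, and key. -/
def SatS (w : WorldS K G N) (l : K → N → Set K) (k : K) : FmlS K G N → Prop
  | .bdto p q => interpS w l q k ⊆ interpS w l p k
  | .cert k' φ => φ ∈ w.certs k'
  | .not φ => ¬ SatS w l k φ
  | .and φ ψ => SatS w l k φ ∧ SatS w l k ψ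

/-- Consistency of a local name assignment with a world. -/
def ConsistentS (w : WorldS K G N) (l : K → N → Set K) : Prop :=
  ∀ (k : K) (n : N) (p : PExpS K G N),
    FmlS.bdto (.loc n) p ∈ w.certs k → SatS w l k (.bdto (.loc n) p)

/-- `φ` is o-valid: no triple satisfies `¬φ` under the open semantics. -/
def OValidS (φ : FmlS K G N) : Prop :=
  ¬ ∃ (w : WorldS K G N) (l : K → N → Set K) (k : K),
      SatS w l k (.not φ) ∧ ConsistentS w l

/-- Material implication, as a classical abbreviation. -/
def FmlS.imp (φ ψ : FmlS K G N) : FmlS K G N := .not (.and φ (.not ψ))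

/-- Disjunction, as a classical abbreviation. -/
def FmlS.or (φ ψ : FmlS K G N) : FmlS K G N := .not (.and (.not φ) (.not ψ))

/-- Biconditional, as a classical abbreviation. -/
def FmlS.iff (φ ψ : FmlS K G N) : FmlS K G N := .and (φ.imp ψ) (ψ.imp φ)

/-- Boolean evaluation of a formula treating `▷`- and `cert`-formulas as atoms. -/
def evalBS (v : FmlS K G N → Bool) : FmlS K G N → Bool
  | .not φ => !(evalBS v φ)
  | .and φ ψ => evalBS v φ && evalBS v ψ
  | φ => v φ

/-- `φ` is an instance of a propositional tautology. -/
def TautologyS (φ : FmlS K G N) : Prop := ∀ v : FmlS K G N → Bool, evalBS v φ = true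

/-- Global identifiers: keys and global names. -/
def IsGlobalIdS : PExpS K G N → Prop
  | .key _ => True
  | .glob _ => True
  | _ => False

/-- Disjunction of the nonempty list `φ :: l` of formulas. -/
def bigOrS (φ : FmlS K G N) : List (FmlS K G N) → FmlS K G N
  | [] => φ
  | ψ :: rest => φ.or (bigOrS ψ rest)

/-- The disjunction `⋁_{k ∈ K} f k`, where `k₀ :: L` enumerates `K`. -/
def disjOverS (f : K → FmlS K G N) (k₀ : K) (L : List K) : FmlS K G N :=
  bigOrS (f k₀) (L.map f)

/-- The axiom system `AX_inf^self`: `AX_inf` together with the Identity and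
Self-is-key axioms. -/
inductive PrvSInf : FmlS K G N → Prop
  | taut {φ : FmlS K G N} : TautologyS φ → PrvSInf φ
  | refl (p : PExpS K G N) : PrvSInf (.bdto p p)
  | trans (p q r : PExpS K G N) :
      PrvSInf ((FmlS.bdto p q).imp ((FmlS.bdto q r).imp (.bdto p r)))
  | leftMono (p q r : PExpS K G N) :
      PrvSInf ((FmlS.bdto p q).imp (.bdto (p.s r) (q.s r)))
  | assoc₁ (p q r : PExpS K G N) : PrvSInf (.bdto ((p.s q).s r) (p.s (q.s r)))
  | assoc₂ (p q r : PExpS K G N) : PrvSInf (.bdto (p.s (q.s r)) ((p.s q).s r))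
  | keyGlob (k : K) (g : PExpS K G N) (hg : IsGlobalIdS g) :
      PrvSInf (.bdto ((PExpS.key k).s g) g)
  | glob (p : PExpS K G N) (k : K) (g : PExpS K G N) (hg : IsGlobalIdS g) :
      PrvSInf ((FmlS.bdto (p.s (.key k)) (.key k)).imp (.bdto (p.s g) g))
  | convGlob (p g : PExpS K G N) (hg : IsGlobalIdS g) : PrvSInf (.bdto g (p.s g))
  | keyLink (k : K) (n : N) (r : PExpS K G N) :
      PrvSInf ((FmlS.cert k (.bdto (.loc n) r)).imp
        (.bdto ((PExpS.key k).s (.loc n)) ((PExpS.key k).s r)))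
  | nonempA (p : PExpS K G N) (k₁ k : K) :
      PrvSInf ((FmlS.bdto p (.key k₁)).imp (.bdto (p.s (.key k)) (.key k)))
  | nonempB (p q : PExpS K G N) (k : K) :
      PrvSInf ((FmlS.not (.bdto p q)).imp (.bdto (q.s (.key k)) (.key k)))
  | nonempC (p q : PExpS K G N) (k₁ k : K) :
      PrvSInf ((FmlS.bdto (p.s q) (.key k₁)).imp (.bdto (p.s (.key k)) (.key k)))
  | nonempD (p : PExpS K G N) (k k' : K) :
      PrvSInf ((FmlS.and (.bdto (p.s (.key k)) (.key k)) (.bdto (.key k') p)).imp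
        (.bdto p (.key k')))
  | keyDist (k₁ k₂ : K) (hne : k₁ ≠ k₂) : PrvSInf (.not (.bdto (.key k₁) (.key k₂)))
  | identity₁ (p : PExpS K G N) : PrvSInf (.bdto (PExpS.self.s p) p)
  | identity₂ (p : PExpS K G N) : PrvSInf (.bdto p (PExpS.self.s p))
  | identity₃ (p : PExpS K G N) : PrvSInf (.bdto (p.s PExpS.self) p)
  | identity₄ (p : PExpS K G N) : PrvSInf (.bdto p (p.s PExpS.self))
  | selfIsKey (p : PExpS K G N) (k : K) :
      PrvSInf ((FmlS.and (.bdto PExpS.self p) (.bdto (p.s (.key k)) (.key k))).imp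
        (.bdto p PExpS.self))
  | mp {φ ψ : FmlS K G N} : PrvSInf φ → PrvSInf (φ.imp ψ) → PrvSInf ψ

/-- The axiom system `AX_fin^self`: `AX_fin` together with the Identity and
Self-is-key axioms. -/
inductive PrvSFin : FmlS K G N → Prop
  | taut {φ : FmlS K G N} : TautologyS φ → PrvSFin φ
  | refl (p : PExpS K G N) : PrvSFin (.bdto p p)
  | trans (p q r : PExpS K G N) :
      PrvSFin ((FmlS.bdto p q).imp ((FmlS.bdto q r).imp (.bdto p r)))
  | leftMono (p q r : PExpS K G N) :
      PrvSFin ((FmlS.bdto p q).imp (.bdto (p.s r) (q.s r)))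
  | assoc₁ (p q r : PExpS K G N) : PrvSFin (.bdto ((p.s q).s r) (p.s (q.s r)))
  | assoc₂ (p q r : PExpS K G N) : PrvSFin (.bdto (p.s (q.s r)) ((p.s q).s r))
  | keyGlob (k : K) (g : PExpS K G N) (hg : IsGlobalIdS g) :
      PrvSFin (.bdto ((PExpS.key k).s g) g)
  | glob (p : PExpS K G N) (k : K) (g : PExpS K G N) (hg : IsGlobalIdS g) :
      PrvSFin ((FmlS.bdto (p.s (.key k)) (.key k)).imp (.bdto (p.s g) g))
  | convGlob (p g : PExpS K G N) (hg : IsGlobalIdS g) : PrvSFin (.bdto g (p.s g))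
  | keyLink (k : K) (n : N) (r : PExpS K G N) :
      PrvSFin ((FmlS.cert k (.bdto (.loc n) r)).imp
        (.bdto ((PExpS.key k).s (.loc n)) ((PExpS.key k).s r)))
  | nonempA (p : PExpS K G N) (k₁ k : K) :
      PrvSFin ((FmlS.bdto p (.key k₁)).imp (.bdto (p.s (.key k)) (.key k)))
  | nonempB (p q : PExpS K G N) (k : K) :
      PrvSFin ((FmlS.not (.bdto p q)).imp (.bdto (q.s (.key k)) (.key k)))
  | nonempC (p q : PExpS K G N) (k₁ k : K) :
      PrvSFin ((FmlS.bdto (p.s q) (.key k₁)).imp (.bdto (p.s (.key k)) (.key k)))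
  | nonempD (p : PExpS K G N) (k k' : K) :
      PrvSFin ((FmlS.and (.bdto (p.s (.key k)) (.key k)) (.bdto (.key k') p)).imp
        (.bdto p (.key k')))
  | keyDist (k₁ k₂ : K) (hne : k₁ ≠ k₂) : PrvSFin (.not (.bdto (.key k₁) (.key k₂)))
  | witnesses₁ (p q : PExpS K G N) (k₀ : K) (L : List K)
      (hnd : (k₀ :: L).Nodup) (hall : ∀ k : K, k ∈ k₀ :: L) :
      PrvSFin ((FmlS.not (.bdto p q)).imp
        (disjOverS (fun k => FmlS.and (.not (.bdto p (.key k))) (.bdto q (.key k))) k₀ L))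
  | witnesses₂ (p q : PExpS K G N) (k₁ : K) (k₀ : K) (L : List K)
      (hnd : (k₀ :: L).Nodup) (hall : ∀ k : K, k ∈ k₀ :: L) :
      PrvSFin ((FmlS.bdto (p.s q) (.key k₁)).imp
        (disjOverS (fun k => FmlS.and (.bdto p (.key k))
          (.bdto ((PExpS.key k).s q) (.key k₁))) k₀ L))
  | currentPrincipal (nsel : K → N) (lsel : K → K) (k₀ : K) (L : List K)
      (hnd : (k₀ :: L).Nodup) (hall : ∀ k : K, k ∈ k₀ :: L) :
      PrvSFin (disjOverS (fun k => FmlS.iff (.bdto (.loc (nsel k)) (.key (lsel k)))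
        (.bdto ((PExpS.key k).s (.loc (nsel k))) (.key (lsel k)))) k₀ L)
  | identity₁ (p : PExpS K G N) : PrvSFin (.bdto (PExpS.self.s p) p)
  | identity₂ (p : PExpS K G N) : PrvSFin (.bdto p (PExpS.self.s p))
  | identity₃ (p : PExpS K G N) : PrvSFin (.bdto (p.s PExpS.self) p)
  | identity₄ (p : PExpS K G N) : PrvSFin (.bdto p (p.s PExpS.self))
  | selfIsKey (p : PExpS K G N) (k : K) :
      PrvSFin ((FmlS.and (.bdto PExpS.self p) (.bdto (p.s (.key k)) (.key k))).imp
        (.bdto p PExpS.self))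
  | mp {φ ψ : FmlS K G N} : PrvSFin φ → PrvSFin (φ.imp ψ) → PrvSFin ψ

/-! ### Auxiliary development -/

section Aux

open Classical

/-! #### Basic lemmas about `evalBS` -/

lemma evalBS_bdto (v : FmlS K G N → Bool) (p q) : evalBS v (.bdto p q) = v (.bdto p q) := rfl
lemma evalBS_cert (v : FmlS K G N → Bool) (k ψ) : evalBS v (.cert k ψ) = v (.cert k ψ) := rfl
lemma evalBS_not (v : FmlS K G N → Bool) (ψ) : evalBS v (.not ψ) = !(evalBS v ψ) := rfl
lemma evalBS_and (v : FmlS K G N → Bool) (ψ χ) :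
    evalBS v (.and ψ χ) = (evalBS v ψ && evalBS v χ) := rfl

lemma evalBS_not_true {v : FmlS K G N → Bool} {ψ} :
    evalBS v (.not ψ) = true ↔ ¬ (evalBS v ψ = true) := by
  rw [evalBS_not]; cases evalBS v ψ <;> simp

lemma evalBS_and_true {v : FmlS K G N → Bool} {ψ χ} :
    evalBS v (.and ψ χ) = true ↔ (evalBS v ψ = true ∧ evalBS v χ = true) := by
  rw [evalBS_and]; cases evalBS v ψ <;> cases evalBS v χ <;> simp

lemma evalBS_imp_true {v : FmlS K G N → Bool} {ψ χ} :
    evalBS v (ψ.imp χ) = true ↔ (evalBS v ψ = true → evalBS v χ = true) := by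
  show evalBS v (.not (.and ψ (.not χ))) = true ↔ _
  rw [evalBS_not_true, evalBS_and_true, evalBS_not_true]; tauto

lemma evalBS_or_true {v : FmlS K G N → Bool} {ψ χ} :
    evalBS v (ψ.or χ) = true ↔ (evalBS v ψ = true ∨ evalBS v χ = true) := by
  show evalBS v (.not (.and (.not ψ) (.not χ))) = true ↔ _
  rw [evalBS_not_true, evalBS_and_true, evalBS_not_true, evalBS_not_true]; tauto

lemma evalBS_iff_true {v : FmlS K G N → Bool} {ψ χ} :
    evalBS v (FmlS.iff ψ χ) = true ↔ (evalBS v ψ = true ↔ evalBS v χ = true) := by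
  show evalBS v (.and (ψ.imp χ) (χ.imp ψ)) = true ↔ _
  rw [evalBS_and_true, evalBS_imp_true, evalBS_imp_true]; tauto

lemma evalBS_bigOr_true {v : FmlS K G N → Bool} {ψ : FmlS K G N} {L : List (FmlS K G N)} :
    evalBS v (bigOrS ψ L) = true ↔ (evalBS v ψ = true ∨ ∃ χ ∈ L, evalBS v χ = true) := by
  induction L generalizing ψ with
  | nil => simp [bigOrS]
  | cons χ rest ih =>
      show evalBS v (ψ.or (bigOrS χ rest)) = true ↔ _
      rw [evalBS_or_true, ih]; simp

lemma evalBS_disjOver_true {v : FmlS K G N → Bool} {f : K → FmlS K G N} {k₀ : K} {L : List K} :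
    evalBS v (disjOverS f k₀ L) = true ↔ ∃ j ∈ k₀ :: L, evalBS v (f j) = true := by
  show evalBS v (bigOrS (f k₀) (L.map f)) = true ↔ _
  rw [evalBS_bigOr_true]; simp

/-! #### Basic lemmas about `SatS` and `interpS` -/

lemma SatS_bdto {w : WorldS K G N} {l k p q} :
    SatS w l k (.bdto p q) ↔ interpS w l q k ⊆ interpS w l p k := Iff.rfl
lemma SatS_cert {w : WorldS K G N} {l k k' ψ} :
    SatS w l k (.cert k' ψ) ↔ ψ ∈ w.certs k' := Iff.rfl
lemma SatS_not {w : WorldS K G N} {l k ψ} : SatS w l k (.not ψ) ↔ ¬ SatS w l k ψ := Iff.rfl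
lemma SatS_and {w : WorldS K G N} {l k ψ χ} :
    SatS w l k (.and ψ χ) ↔ (SatS w l k ψ ∧ SatS w l k χ) := Iff.rfl

lemma SatS_imp {w : WorldS K G N} {l k ψ χ} :
    SatS w l k (ψ.imp χ) ↔ (SatS w l k ψ → SatS w l k χ) := by
  show ¬ (SatS w l k ψ ∧ ¬ SatS w l k χ) ↔ _; tauto

lemma SatS_or {w : WorldS K G N} {l k ψ χ} :
    SatS w l k (ψ.or χ) ↔ (SatS w l k ψ ∨ SatS w l k χ) := by
  show ¬ (¬ SatS w l k ψ ∧ ¬ SatS w l k χ) ↔ _; tauto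

lemma SatS_iff {w : WorldS K G N} {l k ψ χ} :
    SatS w l k (FmlS.iff ψ χ) ↔ (SatS w l k ψ ↔ SatS w l k χ) := by
  show (SatS w l k (ψ.imp χ) ∧ SatS w l k (χ.imp ψ)) ↔ _
  rw [SatS_imp, SatS_imp]; tauto

lemma SatS_bigOr {w : WorldS K G N} {l k} {ψ : FmlS K G N} {L : List (FmlS K G N)} :
    SatS w l k (bigOrS ψ L) ↔ (SatS w l k ψ ∨ ∃ χ ∈ L, SatS w l k χ) := by
  induction L generalizing ψ with
  | nil => simp [bigOrS]
  | cons χ rest ih =>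
      show SatS w l k (ψ.or (bigOrS χ rest)) ↔ _
      rw [SatS_or, ih]; simp

lemma SatS_disjOver {w : WorldS K G N} {l k} {f : K → FmlS K G N} {k₀ : K} {L : List K} :
    SatS w l k (disjOverS f k₀ L) ↔ ∃ j ∈ k₀ :: L, SatS w l k (f j) := by
  show SatS w l k (bigOrS (f k₀) (L.map f)) ↔ _
  rw [SatS_bigOr]; simp

lemma mem_interpS_s {w : WorldS K G N} {l p q k x} :
    x ∈ interpS w l (p.s q) k ↔ ∃ y, y ∈ interpS w l p k ∧ x ∈ interpS w l q y := by
  show x ∈ ⋃ k' ∈ interpS w l p k, interpS w l q k' ↔ _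
  simp

lemma interpS_key {w : WorldS K G N} {l k k'} : interpS w l (.key k') k = {k'} := rfl
lemma interpS_glob {w : WorldS K G N} {l k g} : interpS w l (.glob g) k = w.beta g := rfl
lemma interpS_loc {w : WorldS K G N} {l k n} : interpS w l (.loc n) k = l k n := rfl
lemma interpS_self {w : WorldS K G N} {l k} : interpS w l (.self) k = {k} := rfl

lemma interpS_globalId {w : WorldS K G N} {l g k k'} (hg : IsGlobalIdS g) :
    interpS w l g k = interpS w l g k' := by
  cases g <;> first | rfl | exact absurd hg (by simp [IsGlobalIdS])

/-- A Boolean valuation matching satisfaction at a point. -/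
lemma exists_val_of_sat (w : WorldS K G N) (l : K → N → Set K) (k : K) :
    ∃ v : FmlS K G N → Bool, ∀ ψ, evalBS v ψ = true ↔ SatS w l k ψ := by
  classical
  refine ⟨fun χ => decide (SatS w l k χ), fun ψ => ?_⟩
  induction ψ with
  | bdto p q => simp [evalBS]
  | cert k' χ _ => simp [evalBS]
  | not χ ih => rw [evalBS_not_true, ih]; exact Iff.rfl
  | and χ₁ χ₂ ih1 ih2 => rw [evalBS_and_true, ih1, ih2]; exact Iff.rfl

/-! #### Soundness -/

theorem sound_fin {ψ : FmlS K G N} (h : PrvSFin ψ) :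
    ∀ (w : WorldS K G N) (l : K → N → Set K) (k : K), ConsistentS w l → SatS w l k ψ := by
  induction h with
  | @taut ψ ht =>
      intro w l k _
      obtain ⟨v, hv⟩ := exists_val_of_sat w l k
      exact (hv ψ).mp (ht v)
  | refl p => intro w l k _; exact fun x hx => hx
  | trans p q r =>
      intro w l k _
      rw [SatS_imp, SatS_imp]
      exact fun h1 h2 x hx => h1 (h2 hx)
  | leftMono p q r =>
      intro w l k _
      rw [SatS_imp]
      intro h1 x hx
      obtain ⟨y, hy, hx⟩ := mem_interpS_s.mp hx
      exact mem_interpS_s.mpr ⟨y, h1 hy, hx⟩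
  | assoc₁ p q r =>
      -- Sat: ⟦p's(q's r)⟧ ⊆ ⟦(p's q)'s r⟧
      intro w l k _
      intro x hx
      obtain ⟨y, hy, hx⟩ := mem_interpS_s.mp hx
      obtain ⟨z, hz, hx⟩ := mem_interpS_s.mp hx
      exact mem_interpS_s.mpr ⟨z, mem_interpS_s.mpr ⟨y, hy, hz⟩, hx⟩
  | assoc₂ p q r =>
      intro w l k _
      intro x hx
      obtain ⟨y, hy, hx⟩ := mem_interpS_s.mp hx
      obtain ⟨z, hz, hy⟩ := mem_interpS_s.mp hy
      exact mem_interpS_s.mpr ⟨z, hz, mem_interpS_s.mpr ⟨y, hy, hx⟩⟩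
  | convGlob p g hg =>
      intro w l k _
      intro x hx
      obtain ⟨y, hy, hx⟩ := mem_interpS_s.mp hx
      exact (interpS_globalId hg) ▸ hx
  | keyGlob k' g hg =>
      intro w l k _ x hx
      exact mem_interpS_s.mpr ⟨k', rfl, (interpS_globalId hg) ▸ hx⟩
  | glob p k' g hg =>
      intro w l k _
      rw [SatS_imp]
      intro h1 x hx
      obtain ⟨y, hy, _⟩ := mem_interpS_s.mp (h1 rfl)
      exact mem_interpS_s.mpr ⟨y, hy, (interpS_globalId hg) ▸ hx⟩
  | keyLink k' n r =>
      intro w l k hc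
      rw [SatS_imp]
      intro h1 x hx
      obtain ⟨y, hy, hx⟩ := mem_interpS_s.mp hx
      cases hy
      exact mem_interpS_s.mpr ⟨k', rfl, hc k' n r h1 hx⟩
  | nonempA p k₁ k' =>
      intro w l k _
      rw [SatS_imp]
      intro h1 x hx
      cases hx
      exact mem_interpS_s.mpr ⟨k₁, h1 rfl, rfl⟩
  | nonempB p q k' =>
      intro w l k _
      rw [SatS_imp]
      intro h1 x hx
      obtain ⟨y, hy, -⟩ := Set.not_subset.mp h1
      cases hx
      exact mem_interpS_s.mpr ⟨y, hy, rfl⟩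
  | nonempC p q k₁ k' =>
      intro w l k _
      rw [SatS_imp]
      intro h1 x hx
      obtain ⟨y, hy, -⟩ := mem_interpS_s.mp (h1 rfl)
      cases hx
      exact mem_interpS_s.mpr ⟨y, hy, rfl⟩
  | nonempD p k' k'' =>
      intro w l k _
      rw [SatS_imp]
      rintro ⟨h1, h2⟩ x hx
      obtain ⟨y, hy, -⟩ := mem_interpS_s.mp (h1 rfl)
      cases hx
      have := h2 hy
      rwa [Set.mem_singleton_iff.mp this] at hy
  | keyDist k₁ k₂ hne =>
      intro w l k _
      rw [SatS_not]
      intro h1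
      exact hne (Set.mem_singleton_iff.mp (h1 rfl)).symm
  | witnesses₁ p q k₀ L hnd hall =>
      intro w l k _
      rw [SatS_imp]
      intro h1
      obtain ⟨x, hxq, hxp⟩ := Set.not_subset.mp h1
      refine SatS_disjOver.mpr ⟨x, hall x, ?_⟩
      refine ⟨fun hc => hxp (hc rfl), fun y hy => ?_⟩
      cases hy; exact hxq
  | witnesses₂ p q k₁ k₀ L hnd hall =>
      intro w l k _
      rw [SatS_imp]
      intro h1
      obtain ⟨y, hy, hk₁⟩ := mem_interpS_s.mp (h1 rfl)
      refine SatS_disjOver.mpr ⟨y, hall y, ?_⟩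
      refine ⟨fun z hz => by cases hz; exact hy, fun z hz => ?_⟩
      cases hz
      exact mem_interpS_s.mpr ⟨y, rfl, hk₁⟩
  | currentPrincipal nsel lsel k₀ L hnd hall =>
      intro w l k _
      refine SatS_disjOver.mpr ⟨k, hall k, ?_⟩
      rw [SatS_iff]
      constructor
      · intro h1 x hx
        exact mem_interpS_s.mpr ⟨k, rfl, h1 hx⟩
      · intro h1 x hx
        obtain ⟨y, hy, hx⟩ := mem_interpS_s.mp (h1 hx)
        cases hy; exact hx
  | identity₁ p =>
      intro w l k _ x hx
      exact mem_interpS_s.mpr ⟨k, rfl, hx⟩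
  | identity₂ p =>
      intro w l k _ x hx
      obtain ⟨y, hy, hx⟩ := mem_interpS_s.mp hx
      cases hy; exact hx
  | identity₃ p =>
      intro w l k _ x hx
      exact mem_interpS_s.mpr ⟨x, hx, rfl⟩
  | identity₄ p =>
      intro w l k _ x hx
      obtain ⟨y, hy, hx⟩ := mem_interpS_s.mp hx
      cases hx; exact hy
  | selfIsKey p k' =>
      intro w l k _
      rw [SatS_imp]
      rintro ⟨h1, h2⟩ x hx
      obtain ⟨y, hy, -⟩ := mem_interpS_s.mp (h2 rfl)
      cases hx
      have := h1 hy
      rwa [Set.mem_singleton_iff.mp this] at hy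
  | mp h1 h2 ih1 ih2 =>
      intro w l k hc
      exact SatS_imp.mp (ih2 w l k hc) (ih1 w l k hc)

theorem inf_to_fin {ψ : FmlS K G N} (h : PrvSInf ψ) : PrvSFin ψ := by
  induction h with
  | taut ht => exact .taut ht
  | refl p => exact .refl p
  | trans p q r => exact .trans p q r
  | leftMono p q r => exact .leftMono p q r
  | assoc₁ p q r => exact .assoc₁ p q r
  | assoc₂ p q r => exact .assoc₂ p q r
  | keyGlob k g hg => exact .keyGlob k g hg
  | glob p k g hg => exact .glob p k g hg
  | convGlob p g hg => exact .convGlob p g hg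
  | keyLink k n r => exact .keyLink k n r
  | nonempA p k₁ k => exact .nonempA p k₁ k
  | nonempB p q k => exact .nonempB p q k
  | nonempC p q k₁ k => exact .nonempC p q k₁ k
  | nonempD p k k' => exact .nonempD p k k'
  | keyDist k₁ k₂ hne => exact .keyDist k₁ k₂ hne
  | identity₁ p => exact .identity₁ p
  | identity₂ p => exact .identity₂ p
  | identity₃ p => exact .identity₃ p
  | identity₄ p => exact .identity₄ p
  | selfIsKey p k => exact .selfIsKey p k
  | mp h1 h2 ih1 ih2 => exact .mp ih1 ih2

end Aux

/-! #### Propositional saturation (Lindenbaum-style) -/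

section PropCore

open Classical

/-- Finite satisfiability of a set of formulas. -/
def FinSatS (Δ : Set (FmlS K G N)) : Prop :=
  ∀ l : List (FmlS K G N), (∀ χ ∈ l, χ ∈ Δ) → ∃ v, ∀ χ ∈ l, evalBS v χ = true

/-- Iterated implication. -/
def impChain : List (FmlS K G N) → FmlS K G N → FmlS K G N
  | [], ψ => ψ
  | χ :: l, ψ => χ.imp (impChain l ψ)

lemma evalBS_impChain {v : FmlS K G N → Bool} {l : List (FmlS K G N)} {ψ} :
    evalBS v (impChain l ψ) = true ↔ ((∀ χ ∈ l, evalBS v χ = true) → evalBS v ψ = true) := by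
  induction l with
  | nil => simp [impChain]
  | cons χ l ih =>
      show evalBS v (χ.imp (impChain l ψ)) = true ↔ _
      rw [evalBS_imp_true, ih]; simp

lemma prv_of_impChain {Prv : FmlS K G N → Prop}
    (Hmp : ∀ {ψ χ}, Prv ψ → Prv (ψ.imp χ) → Prv χ)
    {l : List (FmlS K G N)} {ψ} (h : Prv (impChain l ψ)) (hl : ∀ χ ∈ l, Prv χ) : Prv ψ := by
  induction l with
  | nil => exact h
  | cons χ l ih =>
      exact ih (Hmp (hl χ (List.mem_cons_self)) h)
        (fun χ' h' => hl _ (List.mem_cons_of_mem _ h'))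

lemma chain_list_bound {α : Type*} {c : Set (Set α)} (hchain : IsChain (· ⊆ ·) c)
    (hne : c.Nonempty) :
    ∀ l : List α, (∀ x ∈ l, ∃ t ∈ c, x ∈ t) → ∃ t ∈ c, ∀ x ∈ l, x ∈ t := by
  intro l
  induction l with
  | nil => exact fun _ => ⟨hne.choose, hne.choose_spec, by simp⟩
  | cons x l ih =>
      intro h
      obtain ⟨t, htc, hall⟩ := ih (fun y hy => h y (List.mem_cons_of_mem _ hy))
      obtain ⟨s, hsc, hxs⟩ := h x (List.mem_cons_self)
      rcases hchain.total htc hsc with hts | hst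
      · exact ⟨s, hsc, by
          intro y hy
          rcases List.mem_cons.mp hy with rfl | hy
          · exact hxs
          · exact hts (hall y hy)⟩
      · exact ⟨t, htc, by
          intro y hy
          rcases List.mem_cons.mp hy with rfl | hy
          · exact hst hxs
          · exact hall y hy⟩

/-- Key construction: from non-provability, get a Boolean valuation making all
provable formulas true and `φ` false. -/
theorem exists_valuation (Prv : FmlS K G N → Prop)
    (Htaut : ∀ {ψ : FmlS K G N}, TautologyS ψ → Prv ψ)
    (Hmp : ∀ {ψ χ : FmlS K G N}, Prv ψ → Prv (ψ.imp χ) → Prv χ)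
    {φ : FmlS K G N} (h : ¬ Prv φ) :
    ∃ v : FmlS K G N → Bool, (∀ ψ, Prv ψ → evalBS v ψ = true) ∧ evalBS v φ = false := by
  classical
  set Δ₀ : Set (FmlS K G N) := {ψ | Prv ψ} ∪ {FmlS.not φ} with hΔ₀def
  have hΔ₀ : FinSatS Δ₀ := by
    intro l hl
    by_contra hns
    push_neg at hns
    set l' := l.filter (fun χ => decide (χ ≠ FmlS.not φ)) with hl'def
    have hl'p : ∀ χ ∈ l', Prv χ := by
      intro χ hχ
      obtain ⟨hmem, hcond⟩ := List.mem_filter.mp hχ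
      have hne : χ ≠ FmlS.not φ := by simpa using hcond
      rcases hl χ hmem with hp | he
      · exact hp
      · exact absurd he hne
    have htc : TautologyS (impChain l' φ) := by
      intro v
      rw [evalBS_impChain]
      intro hall
      by_contra hφ
      obtain ⟨χ, hχl, hχf⟩ := hns v
      by_cases hχ : χ = FmlS.not φ
      · subst hχ
        exact hχf (evalBS_not_true.mpr hφ)
      · exact hχf (hall χ (List.mem_filter.mpr ⟨hχl, by simpa using hχ⟩))
    exact h (prv_of_impChain (fun {a b} => Hmp) (Htaut htc) hl'p)
  obtain ⟨M, hsub, hmax⟩ := zorn_subset_nonempty {Δ : Set (FmlS K G N) | FinSatS Δ}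
    (by
      intro c hc hchain hne
      refine ⟨⋃₀ c, ?_, fun s hs => Set.subset_sUnion_of_mem hs⟩
      intro l hl
      obtain ⟨t, htc, hall⟩ := chain_list_bound hchain hne l
        (fun x hx => Set.mem_sUnion.mp (hl x hx))
      exact hc htc l hall) Δ₀ hΔ₀
  have hMfin : FinSatS M := hmax.prop
  have hpair : ∀ ψ, ψ ∈ M → FmlS.not ψ ∈ M → False := by
    intro ψ h1 h2
    obtain ⟨v, hv⟩ := hMfin [ψ, FmlS.not ψ] (by
      intro χ hχ
      rcases List.mem_cons.mp hχ with rfl | hχ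
      · exact h1
      · rcases List.mem_cons.mp hχ with rfl | hχ
        · exact h2
        · simp at hχ)
    have ha := hv ψ (by simp)
    have hb := hv (FmlS.not ψ) (by simp)
    rw [evalBS_not_true] at hb
    exact hb ha
  have hdec : ∀ ψ, ψ ∉ M → FmlS.not ψ ∈ M := by
    intro ψ hψ
    by_cases h1 : FinSatS (insert ψ M)
    · have heq : M = insert ψ M := hmax.eq_of_le h1 (Set.subset_insert _ _)
      have hmem : ψ ∈ insert ψ M := Set.mem_insert ψ M
      rw [← heq] at hmem
      exact absurd hmem hψ
    · by_cases h2 : FinSatS (insert (FmlS.not ψ) M)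
      · have heq : M = insert (FmlS.not ψ) M := hmax.eq_of_le h2 (Set.subset_insert _ _)
        have hmem : FmlS.not ψ ∈ insert (FmlS.not ψ) M := Set.mem_insert _ M
        rw [← heq] at hmem
        exact hmem
      · exfalso
        unfold FinSatS at h1 h2
        push_neg at h1 h2
        obtain ⟨l₁, hl₁, hun₁⟩ := h1
        obtain ⟨l₂, hl₂, hun₂⟩ := h2
        obtain ⟨v, hv⟩ := hMfin ((l₁ ++ l₂).filter (fun χ => decide (χ ∈ M)))
          (by intro χ hχ; simpa using (List.mem_filter.mp hχ).2)
        have hvM : ∀ χ ∈ l₁ ++ l₂, χ ∈ M → evalBS v χ = true := by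
          intro χ hχ hm
          exact hv χ (List.mem_filter.mpr ⟨hχ, by simpa using hm⟩)
        by_cases hψv : evalBS v ψ = true
        · obtain ⟨χ, hχ, hf⟩ := hun₁ v
          rcases Set.mem_insert_iff.mp (hl₁ χ hχ) with rfl | hm
          · exact hf hψv
          · exact hf (hvM χ (List.mem_append_left _ hχ) hm)
        · obtain ⟨χ, hχ, hf⟩ := hun₂ v
          rcases Set.mem_insert_iff.mp (hl₂ χ hχ) with rfl | hm
          · exact hf (evalBS_not_true.mpr hψv)
          · exact hf (hvM χ (List.mem_append_right _ hχ) hm)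
  have hand : ∀ ψ χ, FmlS.and ψ χ ∈ M ↔ (ψ ∈ M ∧ χ ∈ M) := by
    intro ψ χ
    constructor
    · intro hm
      constructor
      · by_contra hψ
        obtain ⟨v, hv⟩ := hMfin [FmlS.and ψ χ, FmlS.not ψ] (by
          intro χ' hχ'
          rcases List.mem_cons.mp hχ' with rfl | hχ'
          · exact hm
          · rcases List.mem_cons.mp hχ' with rfl | hχ'
            · exact hdec _ hψ
            · simp at hχ')
        have ha := evalBS_and_true.mp (hv (FmlS.and ψ χ) (by simp))
        have hb := evalBS_not_true.mp (hv (FmlS.not ψ) (by simp))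
        exact hb ha.1
      · by_contra hχ
        obtain ⟨v, hv⟩ := hMfin [FmlS.and ψ χ, FmlS.not χ] (by
          intro χ' hχ'
          rcases List.mem_cons.mp hχ' with rfl | hχ'
          · exact hm
          · rcases List.mem_cons.mp hχ' with rfl | hχ'
            · exact hdec _ hχ
            · simp at hχ')
        have ha := evalBS_and_true.mp (hv (FmlS.and ψ χ) (by simp))
        have hb := evalBS_not_true.mp (hv (FmlS.not χ) (by simp))
        exact hb ha.2
    · rintro ⟨h1, h2⟩
      by_contra hm
      obtain ⟨v, hv⟩ := hMfin [ψ, χ, FmlS.not (FmlS.and ψ χ)] (by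
        intro χ' hχ'
        rcases List.mem_cons.mp hχ' with rfl | hχ'
        · exact h1
        · rcases List.mem_cons.mp hχ' with rfl | hχ'
          · exact h2
          · rcases List.mem_cons.mp hχ' with rfl | hχ'
            · exact hdec _ hm
            · simp at hχ')
      have ha := hv ψ (by simp)
      have hb := hv χ (by simp)
      have hc := evalBS_not_true.mp (hv (FmlS.not (FmlS.and ψ χ)) (by simp))
      exact hc (evalBS_and_true.mpr ⟨ha, hb⟩)
  refine ⟨fun ψ => decide (ψ ∈ M), ?_, ?_⟩
  all_goals
    have hvchar : ∀ ψ : FmlS K G N,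
        evalBS (fun ψ => decide (ψ ∈ M)) ψ = true ↔ ψ ∈ M := by
      intro ψ
      induction ψ with
      | bdto p q => simp [evalBS]
      | cert k' χ _ => simp [evalBS]
      | not χ ih =>
          rw [evalBS_not_true, ih]
          exact ⟨fun hn => hdec _ hn, fun hn hc => hpair _ hc hn⟩
      | and χ₁ χ₂ ih1 ih2 => rw [evalBS_and_true, ih1, ih2, hand]
  · exact fun ψ hp => (hvchar ψ).mpr (hsub (Or.inl hp))
  · have hφM : φ ∉ M := fun hc => hpair φ hc (hsub (Or.inr rfl))
    have := (hvchar φ).not.mpr hφM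
    cases hev : evalBS (fun ψ => decide (ψ ∈ M)) φ
    · rfl
    · exact absurd ((hvchar φ).mp hev) hφM

end PropCore

/-! #### Derived facts at the level of a coherent Boolean valuation -/

/-- `A` is true under `v`. -/
def vT (v : FmlS K G N → Bool) (A : FmlS K G N) : Prop := evalBS v A = true

lemma vT_not {v : FmlS K G N → Bool} {A} : vT v (.not A) ↔ ¬ vT v A := evalBS_not_true
lemma vT_and {v : FmlS K G N → Bool} {A B} : vT v (.and A B) ↔ (vT v A ∧ vT v B) :=
  evalBS_and_true
lemma vT_imp {v : FmlS K G N → Bool} {A B} : vT v (A.imp B) ↔ (vT v A → vT v B) :=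
  evalBS_imp_true

lemma t_mp {v : FmlS K G N → Bool} {A B : FmlS K G N} (h : vT v (A.imp B)) (ha : vT v A) :
    vT v B := vT_imp.mp h ha

/-- `v`-equivalence of two principal expressions. -/
def EqvV (v : FmlS K G N → Bool) (α β : PExpS K G N) : Prop :=
  vT v (.bdto α β) ∧ vT v (.bdto β α)

/-- Purely-`self` principal expressions. -/
def Selfy : PExpS K G N → Prop
  | .self => True
  | .s a b => Selfy a ∧ Selfy b
  | _ => False

lemma selfy_interp {e : PExpS K G N} (he : Selfy e) (w : WorldS K G N) (l : K → N → Set K) :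
    ∀ k : K, interpS w l e k = {k} := by
  induction e with
  | key k => exact absurd he (by simp [Selfy])
  | glob g => exact absurd he (by simp [Selfy])
  | loc n => exact absurd he (by simp [Selfy])
  | self => exact fun k => rfl
  | s a b iha ihb =>
      intro k
      obtain ⟨ha, hb⟩ := he
      ext x
      rw [mem_interpS_s]
      constructor
      · rintro ⟨y, hy, hx⟩
        rw [iha ha k] at hy
        cases hy
        rwa [ihb hb k] at hx
      · rintro hx
        exact ⟨k, by rw [iha ha k]; rfl, by rw [ihb hb k]; exact hx⟩

section VTLemmas

variable {v : FmlS K G N → Bool} (HA : ∀ ψ : FmlS K G N, PrvSInf ψ → vT v ψ)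
include HA

lemma t_refl (p : PExpS K G N) : vT v (.bdto p p) := HA _ (.refl p)

lemma t_trans {p q r : PExpS K G N} (h1 : vT v (.bdto p q)) (h2 : vT v (.bdto q r)) :
    vT v (.bdto p r) := t_mp (t_mp (HA _ (.trans p q r)) h1) h2

lemma t_lmono (r : PExpS K G N) {p q : PExpS K G N} (h : vT v (.bdto p q)) :
    vT v (.bdto (p.s r) (q.s r)) := t_mp (HA _ (.leftMono p q r)) h

lemma t_assoc1 (p q r : PExpS K G N) : vT v (.bdto ((p.s q).s r) (p.s (q.s r))) :=
  HA _ (.assoc₁ p q r)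

lemma t_assoc2 (p q r : PExpS K G N) : vT v (.bdto (p.s (q.s r)) ((p.s q).s r)) :=
  HA _ (.assoc₂ p q r)

lemma t_keyGlob (k : K) (g : PExpS K G N) (hg : IsGlobalIdS g) :
    vT v (.bdto ((PExpS.key k).s g) g) := HA _ (.keyGlob k g hg)

lemma t_glob {p : PExpS K G N} {k : K} (g : PExpS K G N) (hg : IsGlobalIdS g)
    (h : vT v (.bdto (p.s (.key k)) (.key k))) : vT v (.bdto (p.s g) g) :=
  t_mp (HA _ (.glob p k g hg)) h

lemma t_conv (p g : PExpS K G N) (hg : IsGlobalIdS g) : vT v (.bdto g (p.s g)) :=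
  HA _ (.convGlob p g hg)

lemma t_keyLink {k : K} {n : N} {r : PExpS K G N} (h : vT v (.cert k (.bdto (.loc n) r))) :
    vT v (.bdto ((PExpS.key k).s (.loc n)) ((PExpS.key k).s r)) :=
  t_mp (HA _ (.keyLink k n r)) h

lemma t_nonempA {p : PExpS K G N} {k₁ : K} (k : K) (h : vT v (.bdto p (.key k₁))) :
    vT v (.bdto (p.s (.key k)) (.key k)) := t_mp (HA _ (.nonempA p k₁ k)) h

lemma t_nonempB {p q : PExpS K G N} (k : K) (h : ¬ vT v (.bdto p q)) :
    vT v (.bdto (q.s (.key k)) (.key k)) := t_mp (HA _ (.nonempB p q k)) (vT_not.mpr h)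

lemma t_nonempC {p q : PExpS K G N} {k₁ : K} (k : K) (h : vT v (.bdto (p.s q) (.key k₁))) :
    vT v (.bdto (p.s (.key k)) (.key k)) := t_mp (HA _ (.nonempC p q k₁ k)) h

lemma t_nonempD {p : PExpS K G N} {k k' : K} (h1 : vT v (.bdto (p.s (.key k)) (.key k)))
    (h2 : vT v (.bdto (.key k') p)) : vT v (.bdto p (.key k')) :=
  t_mp (HA _ (.nonempD p k k')) (vT_and.mpr ⟨h1, h2⟩)

lemma t_keyDist {k₁ k₂ : K} (hne : k₁ ≠ k₂) : ¬ vT v (.bdto (.key k₁) (.key k₂)) :=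
  vT_not.mp (HA _ (.keyDist k₁ k₂ hne))

lemma t_id1 (p : PExpS K G N) : vT v (.bdto (PExpS.self.s p) p) := HA _ (.identity₁ p)
lemma t_id2 (p : PExpS K G N) : vT v (.bdto p (PExpS.self.s p)) := HA _ (.identity₂ p)
lemma t_id3 (p : PExpS K G N) : vT v (.bdto (p.s PExpS.self) p) := HA _ (.identity₃ p)
lemma t_id4 (p : PExpS K G N) : vT v (.bdto p (p.s PExpS.self)) := HA _ (.identity₄ p)

lemma t_selfIsKey {p : PExpS K G N} {k : K} (h1 : vT v (.bdto PExpS.self p))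
    (h2 : vT v (.bdto (p.s (.key k)) (.key k))) : vT v (.bdto p PExpS.self) :=
  t_mp (HA _ (.selfIsKey p k)) (vT_and.mpr ⟨h1, h2⟩)

lemma eqv_refl (α : PExpS K G N) : EqvV v α α := ⟨t_refl HA α, t_refl HA α⟩

omit HA in
lemma eqv_symm {α β : PExpS K G N} (h : EqvV v α β) : EqvV v β α := ⟨h.2, h.1⟩

lemma eqv_trans {α β γ : PExpS K G N} (h1 : EqvV v α β) (h2 : EqvV v β γ) : EqvV v α γ :=
  ⟨t_trans HA h1.1 h2.1, t_trans HA h2.2 h1.2⟩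

lemma eqv_cong_s {α β : PExpS K G N} (r : PExpS K G N) (h : EqvV v α β) :
    EqvV v (α.s r) (β.s r) := ⟨t_lmono HA r h.1, t_lmono HA r h.2⟩

lemma selfy_eqv {e : PExpS K G N} (he : Selfy e) : ∀ α : PExpS K G N, EqvV v (α.s e) α := by
  induction e with
  | key k => exact absurd he (by simp [Selfy])
  | glob g => exact absurd he (by simp [Selfy])
  | loc n => exact absurd he (by simp [Selfy])
  | self => exact fun α => ⟨t_id3 HA α, t_id4 HA α⟩
  | s a b iha ihb =>
      intro α
      obtain ⟨ha, hb⟩ := he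
      have h1 : EqvV v (α.s (a.s b)) ((α.s a).s b) :=
        ⟨t_assoc2 HA α a b, t_assoc1 HA α a b⟩
      exact eqv_trans HA h1 (eqv_trans HA (ihb hb (α.s a)) (iha ha α))

lemma selfy_eqv_self {e : PExpS K G N} (he : Selfy e) : EqvV v e PExpS.self := by
  have h1 : EqvV v e (PExpS.self.s e) := ⟨t_id2 HA e, t_id1 HA e⟩
  exact eqv_trans HA h1 (selfy_eqv HA he PExpS.self)

end VTLemmas

/-! #### Subformulas and the canonical certificates -/

def subFml : FmlS K G N → List (FmlS K G N)
  | .bdto p q => [.bdto p q]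
  | .cert k ψ => .cert k ψ :: subFml ψ
  | .not ψ => .not ψ :: subFml ψ
  | .and ψ χ => .and ψ χ :: (subFml ψ ++ subFml χ)

lemma mem_subFml_self (ψ : FmlS K G N) : ψ ∈ subFml ψ := by
  cases ψ <;> simp [subFml]

noncomputable def canonCerts (v : FmlS K G N → Bool) (φ : FmlS K G N) : K → Set (FmlS K G N) :=
  fun k' => {ψ | FmlS.cert k' ψ ∈ subFml φ ∧ vT v (.cert k' ψ)}

lemma canonCerts_finite (v : FmlS K G N → Bool) (φ : FmlS K G N) :
    (⋃ k, canonCerts v φ k).Finite := by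
  apply Set.Finite.subset
    (List.finite_toSet ((subFml φ).filterMap
      (fun χ => match χ with | FmlS.cert _ ψ => some ψ | _ => none)))
  intro ψ hψ
  obtain ⟨k', hk'⟩ := Set.mem_iUnion.mp hψ
  obtain ⟨hmem, -⟩ := hk'
  simp only [List.coe_toFinset, List.mem_filterMap, Set.mem_setOf_eq]
  show ∃ χ ∈ subFml φ, _

  exact ⟨FmlS.cert k' ψ, hmem, rfl⟩

/-! #### Completeness for `AX_fin^self` (finite `K`) -/

section FinComplete

variable {v : FmlS K G N → Bool}

/-- Canonical interpretation of globals. -/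
def canonBeta (v : FmlS K G N → Bool) : G → Set K :=
  fun g => {k | vT v (.bdto (.glob g) (.key k))}

/-- Canonical interpretation of local names (finite case). -/
def canonL (v : FmlS K G N → Bool) : K → N → Set K :=
  fun k' n => {k | vT v (.bdto ((PExpS.key k').s (.loc n)) (.key k))}

variable (HF : ∀ ψ : FmlS K G N, PrvSFin ψ → vT v ψ)
include HF

lemma HA_of_HF : ∀ ψ : FmlS K G N, PrvSInf ψ → vT v ψ := fun ψ h => HF ψ (inf_to_fin h)

/-- Truth lemma for principal expressions, finite case. -/
lemma TL1fin {k₀ : K} {L : List K} (hnd : (k₀ :: L).Nodup) (hall : ∀ k : K, k ∈ k₀ :: L)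
    (w : WorldS K G N) (hbeta : w.beta = canonBeta v) :
    ∀ (p : PExpS K G N) (k' k : K),
      k ∈ interpS w (canonL v) p k' ↔ vT v (.bdto ((PExpS.key k').s p) (.key k)) := by
  have HA := HA_of_HF HF
  intro p
  induction p with
  | key k₂ =>
      intro k' k
      rw [interpS_key, Set.mem_singleton_iff]
      constructor
      · rintro rfl
        exact t_keyGlob HA k' (.key k) trivial
      · intro h
        by_contra hne
        have h1 : vT v (.bdto (.key k₂) ((PExpS.key k').s (.key k₂))) :=
          t_conv HA (.key k') (.key k₂) trivial
        exact t_keyDist HA (fun hc => hne hc.symm) (t_trans HA h1 h)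
  | glob g =>
      intro k' k
      rw [interpS_glob, hbeta]
      show vT v (.bdto (.glob g) (.key k)) ↔ _
      constructor
      · intro h
        exact t_trans HA (t_keyGlob HA k' (.glob g) trivial) h
      · intro h
        exact t_trans HA (t_conv HA (.key k') (.glob g) trivial) h
  | loc n =>
      intro k' k
      rw [interpS_loc]
      exact Iff.rfl
  | self =>
      intro k' k
      rw [interpS_self, Set.mem_singleton_iff]
      constructor
      · rintro rfl
        exact t_id3 HA (.key _)
      · intro h
        by_contra hne
        have h1 : vT v (.bdto (.key k') ((PExpS.key k').s PExpS.self)) := t_id4 HA (.key k')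
        exact t_keyDist HA (fun hc => hne hc.symm) (t_trans HA h1 h)
  | s p q ihp ihq =>
      intro k' k
      rw [mem_interpS_s]
      constructor
      · rintro ⟨y, hy, hk⟩
        have h1 := (ihp k' y).mp hy
        have h2 := (ihq y k).mp hk
        have h3 := t_lmono HA q h1
        have h4 := t_trans HA h3 h2
        exact t_trans HA (t_assoc2 HA (.key k') p q) h4
      · intro h
        have h1 := t_trans HA (t_assoc1 HA (.key k') p q) h
        have h2 := t_mp (HF _ (.witnesses₂ ((PExpS.key k').s p) q k k₀ L hnd hall)) h1
        obtain ⟨y, -, hy⟩ := evalBS_disjOver_true.mp h2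
        obtain ⟨ha, hb⟩ := vT_and.mp hy
        exact ⟨y, (ihp k' y).mpr ha, (ihq y k).mpr hb⟩

omit HF in
/-- Transfer between the current key and top-level atoms. -/
lemma transfer_khat (HA : ∀ ψ : FmlS K G N, PrvSInf ψ → vT v ψ) {khat : K}
    (h1 : vT v (.bdto PExpS.self (.key khat))) (h2 : vT v (.bdto (.key khat) PExpS.self)) :
    ∀ (p : PExpS K G N) (k : K),
      vT v (.bdto ((PExpS.key khat).s p) (.key k)) ↔ vT v (.bdto p (.key k)) := by
  intro p k
  have e1 : vT v (.bdto p (PExpS.self.s p)) := t_id2 HA p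
  have e2 : vT v (.bdto (PExpS.self.s p) ((PExpS.key khat).s p)) := t_lmono HA p h1
  have e3 : vT v (.bdto ((PExpS.key khat).s p) (PExpS.self.s p)) := t_lmono HA p h2
  have e4 : vT v (.bdto (PExpS.self.s p) p) := t_id1 HA p
  constructor
  · intro h
    exact t_trans HA (t_trans HA e1 e2) h
  · intro h
    exact t_trans HA (t_trans HA e3 e4) h

/-- Existence of a key acting as `self` (finite case). -/
lemma exists_selfKey {k₀ : K} {L : List K} (hnd : (k₀ :: L).Nodup)
    (hall : ∀ k : K, k ∈ k₀ :: L) :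
    ∃ khat : K, vT v (.bdto PExpS.self (.key khat)) ∧ vT v (.bdto (.key khat) PExpS.self) := by
  have HA := HA_of_HF HF
  have h1 : vT v (.bdto (PExpS.self.s (.key k₀)) (.key k₀)) := t_id1 HA (.key k₀)
  have h2 := t_mp (HF _ (.witnesses₂ PExpS.self (.key k₀) k₀ k₀ L hnd hall)) h1
  obtain ⟨y, -, hy⟩ := evalBS_disjOver_true.mp h2
  obtain ⟨ha, -⟩ := vT_and.mp hy
  refine ⟨y, ha, t_selfIsKey HA ha (t_keyGlob HA y (.key k₀) trivial)⟩

/-- Truth lemma for formulas, finite case. -/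
lemma TLFfin {k₀ : K} {L : List K} (hnd : (k₀ :: L).Nodup) (hall : ∀ k : K, k ∈ k₀ :: L)
    (φ : FmlS K G N) (w : WorldS K G N) (hbeta : w.beta = canonBeta v)
    (hcerts : w.certs = canonCerts v φ) {khat : K}
    (h1 : vT v (.bdto PExpS.self (.key khat))) (h2 : vT v (.bdto (.key khat) PExpS.self)) :
    ∀ ψ : FmlS K G N, (∀ χ ∈ subFml ψ, χ ∈ subFml φ) →
      (SatS w (canonL v) khat ψ ↔ vT v ψ) := by
  have HA := HA_of_HF HF
  have htr := transfer_khat HA h1 h2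
  have hmem : ∀ (p : PExpS K G N) (k : K),
      k ∈ interpS w (canonL v) p khat ↔ vT v (.bdto p (.key k)) := by
    intro p k
    rw [TL1fin HF hnd hall w hbeta p khat k]
    exact htr p k
  intro ψ
  induction ψ with
  | bdto p q =>
      intro _
      rw [SatS_bdto]
      constructor
      · intro hsub
        by_contra hnvt
        have h3 := t_mp (HF _ (.witnesses₁ p q k₀ L hnd hall)) (vT_not.mpr hnvt)
        obtain ⟨y, -, hy⟩ := evalBS_disjOver_true.mp h3
        obtain ⟨ha, hb⟩ := vT_and.mp hy
        exact (vT_not.mp ha) ((hmem p y).mp (hsub ((hmem q y).mpr hb)))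
      · intro hvt x hx
        exact (hmem p x).mpr (t_trans HA hvt ((hmem q x).mp hx))
  | cert k' χ ih =>
      intro hsub
      rw [SatS_cert, hcerts]
      show (FmlS.cert k' χ ∈ subFml φ ∧ vT v (.cert k' χ)) ↔ _
      have hm : FmlS.cert k' χ ∈ subFml φ := hsub _ (mem_subFml_self _)
      exact ⟨fun h => h.2, fun h => ⟨hm, h⟩⟩
  | not χ ih =>
      intro hsub
      rw [SatS_not, vT_not, ih (fun χ' h => hsub χ' (List.mem_cons_of_mem _ h))]
  | and χ₁ χ₂ ih1 ih2 =>
      intro hsub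
      rw [SatS_and, vT_and,
        ih1 (fun χ' h => hsub χ' (List.mem_cons_of_mem _ (List.mem_append_left _ h))),
        ih2 (fun χ' h => hsub χ' (List.mem_cons_of_mem _ (List.mem_append_right _ h)))]

/-- Consistency of the canonical assignment, finite case. -/
lemma consistent_fin {k₀ : K} {L : List K} (hnd : (k₀ :: L).Nodup)
    (hall : ∀ k : K, k ∈ k₀ :: L) (φ : FmlS K G N) (w : WorldS K G N)
    (hbeta : w.beta = canonBeta v) (hcerts : w.certs = canonCerts v φ) :
    ConsistentS w (canonL v) := by
  have HA := HA_of_HF HF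
  intro k' n p hmemc
  rw [hcerts] at hmemc
  obtain ⟨-, hvt⟩ := hmemc
  show interpS w (canonL v) p k' ⊆ interpS w (canonL v) (.loc n) k'
  intro x hx
  have hp := (TL1fin HF hnd hall w hbeta p k' x).mp hx
  have hlink := t_keyLink HA hvt
  exact (TL1fin HF hnd hall w hbeta (.loc n) k' x).mpr (t_trans HA hlink hp)

end FinComplete

/-- Completeness, finite case. -/
theorem complete_fin [Nonempty K] [Finite K] {φ : FmlS K G N} (h : ¬ PrvSFin φ) :
    ¬ OValidS φ := by
  classical
  obtain ⟨v, Hv, hvφ⟩ := exists_valuation (K := K) (G := G) (N := N) PrvSFin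
    (fun ht => .taut ht) (fun h1 h2 => .mp h1 h2) h
  have HF : ∀ ψ : FmlS K G N, PrvSFin ψ → vT v ψ := Hv
  have := Fintype.ofFinite K
  obtain ⟨k₀, L, hlist⟩ : ∃ (k₀ : K) (L : List K), (Finset.univ : Finset K).toList = k₀ :: L := by
    cases hl : (Finset.univ : Finset K).toList with
    | nil =>
        exfalso
        have : (Classical.arbitrary K) ∈ (Finset.univ : Finset K).toList :=
          Finset.mem_toList.mpr (Finset.mem_univ _)
        rw [hl] at this
        simp at this
    | cons a L => exact ⟨a, L, rfl⟩
  have hnd : (k₀ :: L).Nodup := hlist ▸ Finset.nodup_toList _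
  have hall : ∀ k : K, k ∈ k₀ :: L := fun k =>
    hlist ▸ Finset.mem_toList.mpr (Finset.mem_univ k)
  obtain ⟨khat, hk1, hk2⟩ := exists_selfKey HF hnd hall
  set w : WorldS K G N := ⟨canonBeta v, canonCerts v φ, canonCerts_finite v φ⟩ with hw
  intro hov
  apply hov
  refine ⟨w, canonL v, khat, ?_, consistent_fin HF hnd hall φ w rfl rfl⟩
  rw [SatS_not, TLFfin HF hnd hall φ w rfl rfl hk1 hk2 φ (fun χ h => h)]
  intro hc
  rw [vT] at hc
  rw [hvφ] at hc
  exact absurd hc (by simp)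

/-! #### Symbols, goodness, and encodings (infinite case) -/

/-- Keys occurring in a principal expression. -/
def keysE : PExpS K G N → List K
  | .key k => [k]
  | .s p q => keysE p ++ keysE q
  | _ => []

def globsE : PExpS K G N → List G
  | .glob g => [g]
  | .s p q => globsE p ++ globsE q
  | _ => []

def locsE : PExpS K G N → List N
  | .loc n => [n]
  | .s p q => locsE p ++ locsE q
  | _ => []

def keysF : FmlS K G N → List K
  | .bdto p q => keysE p ++ keysE q
  | .cert k ψ => k :: keysF ψ
  | .not ψ => keysF ψ
  | .and ψ χ => keysF ψ ++ keysF χ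

def globsF : FmlS K G N → List G
  | .bdto p q => globsE p ++ globsE q
  | .cert _ ψ => globsF ψ
  | .not ψ => globsF ψ
  | .and ψ χ => globsF ψ ++ globsF χ

def locsF : FmlS K G N → List N
  | .bdto p q => locsE p ++ locsE q
  | .cert _ ψ => locsF ψ
  | .not ψ => locsF ψ
  | .and ψ χ => locsF ψ ++ locsF χ

/-- An expression uses only the given symbols. -/
def goodE (Kl : List K) (Gl : List G) (Nl : List N) : PExpS K G N → Prop
  | .key k => k ∈ Kl
  | .glob g => g ∈ Gl
  | .loc n => n ∈ Nl
  | .self => True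
  | .s p q => goodE Kl Gl Nl p ∧ goodE Kl Gl Nl q

def goodF (Kl : List K) (Gl : List G) (Nl : List N) : FmlS K G N → Prop
  | .bdto p q => goodE Kl Gl Nl p ∧ goodE Kl Gl Nl q
  | .cert k ψ => k ∈ Kl ∧ goodF Kl Gl Nl ψ
  | .not ψ => goodF Kl Gl Nl ψ
  | .and ψ χ => goodF Kl Gl Nl ψ ∧ goodF Kl Gl Nl χ

lemma goodE_mono {Kl Kl' : List K} {Gl Gl' : List G} {Nl Nl' : List N}
    (hK : ∀ x ∈ Kl, x ∈ Kl') (hG : ∀ x ∈ Gl, x ∈ Gl') (hN : ∀ x ∈ Nl, x ∈ Nl') :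
    ∀ p : PExpS K G N, goodE Kl Gl Nl p → goodE Kl' Gl' Nl' p := by
  intro p
  induction p with
  | key k => exact hK k
  | glob g => exact hG g
  | loc n => exact hN n
  | self => exact fun h => h
  | s p q ihp ihq => exact fun h => ⟨ihp h.1, ihq h.2⟩

lemma goodE_self (p : PExpS K G N) : goodE (keysE p) (globsE p) (locsE p) p := by
  induction p with
  | key k => simp [goodE, keysE]
  | glob g => simp [goodE, globsE]
  | loc n => simp [goodE, locsE]
  | self => trivial
  | s p q ihp ihq =>
      constructor
      · exact goodE_mono (fun x h => by simp [keysE]; exact Or.inl h)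
          (fun x h => by simp [globsE]; exact Or.inl h)
          (fun x h => by simp [locsE]; exact Or.inl h) p ihp
      · exact goodE_mono (fun x h => by simp [keysE]; exact Or.inr h)
          (fun x h => by simp [globsE]; exact Or.inr h)
          (fun x h => by simp [locsE]; exact Or.inr h) q ihq

lemma goodF_mono {Kl Kl' : List K} {Gl Gl' : List G} {Nl Nl' : List N}
    (hK : ∀ x ∈ Kl, x ∈ Kl') (hG : ∀ x ∈ Gl, x ∈ Gl') (hN : ∀ x ∈ Nl, x ∈ Nl') :
    ∀ ψ : FmlS K G N, goodF Kl Gl Nl ψ → goodF Kl' Gl' Nl' ψ := by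
  intro ψ
  induction ψ with
  | bdto p q => exact fun h => ⟨goodE_mono hK hG hN p h.1, goodE_mono hK hG hN q h.2⟩
  | cert k ψ ih => exact fun h => ⟨hK k h.1, ih h.2⟩
  | not ψ ih => exact ih
  | and ψ χ ih1 ih2 => exact fun h => ⟨ih1 h.1, ih2 h.2⟩

lemma goodF_self (ψ : FmlS K G N) : goodF (keysF ψ) (globsF ψ) (locsF ψ) ψ := by
  induction ψ with
  | bdto p q =>
      constructor
      · exact goodE_mono (fun x h => by simp [keysF]; exact Or.inl h)
          (fun x h => by simp [globsF]; exact Or.inl h)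
          (fun x h => by simp [locsF]; exact Or.inl h) p (goodE_self p)
      · exact goodE_mono (fun x h => by simp [keysF]; exact Or.inr h)
          (fun x h => by simp [globsF]; exact Or.inr h)
          (fun x h => by simp [locsF]; exact Or.inr h) q (goodE_self q)
  | cert k ψ ih =>
      refine ⟨by simp [keysF], ?_⟩
      exact goodF_mono (fun x h => by simp [keysF]; exact Or.inr h)
        (fun x h => by simp [globsF]; exact h)
        (fun x h => by simp [locsF]; exact h) ψ ih
  | not ψ ih =>
      exact goodF_mono (fun x h => by simp [keysF]; exact h)
        (fun x h => by simp [globsF]; exact h)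
        (fun x h => by simp [locsF]; exact h) ψ ih
  | and ψ χ ih1 ih2 =>
      constructor
      · exact goodF_mono (fun x h => by simp [keysF]; exact Or.inl h)
          (fun x h => by simp [globsF]; exact Or.inl h)
          (fun x h => by simp [locsF]; exact Or.inl h) ψ ih1
      · exact goodF_mono (fun x h => by simp [keysF]; exact Or.inr h)
          (fun x h => by simp [globsF]; exact Or.inr h)
          (fun x h => by simp [locsF]; exact Or.inr h) χ ih2

lemma goodF_sub {Kl : List K} {Gl : List G} {Nl : List N} :
    ∀ ψ : FmlS K G N, ∀ χ ∈ subFml ψ, goodF Kl Gl Nl ψ → goodF Kl Gl Nl χ := by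
  intro ψ
  induction ψ with
  | bdto p q =>
      intro χ hχ h
      simp [subFml] at hχ
      subst hχ
      exact h
  | cert k ψ ih =>
      intro χ hχ h
      rcases List.mem_cons.mp hχ with rfl | hχ
      · exact h
      · exact ih χ hχ h.2
  | not ψ ih =>
      intro χ hχ h
      rcases List.mem_cons.mp hχ with rfl | hχ
      · exact h
      · exact ih χ hχ h
  | and ψ₁ ψ₂ ih1 ih2 =>
      intro χ hχ h
      rcases List.mem_cons.mp hχ with rfl | hχ
      · exact h
      · rcases List.mem_append.mp hχ with hχ | hχ
        · exact ih1 χ hχ h.1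
        · exact ih2 χ hχ h.2

open Classical in
/-- Encoding of principal expressions over given symbol lists. -/
noncomputable def encE (Kl : List K) (Gl : List G) (Nl : List N) : PExpS K G N → ℕ
  | .key k => Nat.pair 0 (Kl.idxOf k)
  | .glob g => Nat.pair 1 (Gl.idxOf g)
  | .loc n => Nat.pair 2 (Nl.idxOf n)
  | .self => Nat.pair 3 0
  | .s p q => Nat.pair 4 (Nat.pair (encE Kl Gl Nl p) (encE Kl Gl Nl q))

lemma encE_inj (Kl : List K) (Gl : List G) (Nl : List N) :
    ∀ p q : PExpS K G N, goodE Kl Gl Nl p → goodE Kl Gl Nl q →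
      encE Kl Gl Nl p = encE Kl Gl Nl q → p = q := by
  classical
  intro p
  induction p with
  | key k =>
      intro q hp hq h
      cases q <;> simp [encE, Nat.pair_eq_pair] at h
      rw [List.idxOf_inj hp] at h
      rw [h]
  | glob g =>
      intro q hp hq h
      cases q <;> simp [encE, Nat.pair_eq_pair] at h
      rw [List.idxOf_inj hp] at h
      rw [h]
  | loc n =>
      intro q hp hq h
      cases q <;> simp [encE, Nat.pair_eq_pair] at h
      rw [List.idxOf_inj hp] at h
      rw [h]
  | self =>
      intro q hp hq h
      cases q <;> simp [encE, Nat.pair_eq_pair] at h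
      rfl
  | s p₁ p₂ ih1 ih2 =>
      intro q hp hq h
      cases q <;> simp [encE, Nat.pair_eq_pair] at h
      case s q₁ q₂ =>
        rw [ih1 q₁ hp.1 hq.1 h.1, ih2 q₂ hp.2 hq.2 h.2]

/-! #### The canonical structure for the infinite case -/

/-- Bundled context for the infinite-case canonical model. -/
structure ICtx (K G N : Type*) where
  v : FmlS K G N → Bool
  Kl : List K
  Gl : List G
  Nl : List N
  khat : K
  witf : PExpS K G N → K
  k0 : K
  HA : ∀ ψ : FmlS K G N, PrvSInf ψ → vT v ψ
  hwit1 : ∀ Q : PExpS K G N, witf Q ∉ Kl ∧ witf Q ≠ khat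
  hwit2 : ∀ Q R : PExpS K G N, goodE Kl Gl Nl Q → goodE Kl Gl Nl R → witf Q = witf R → Q = R
  hkh1 : ∀ k ∈ Kl, vT v (.bdto (.key k) PExpS.self) → k = khat
  hkh2 : khat ∈ Kl → vT v (.bdto (.key khat) PExpS.self)

namespace ICtx

variable {K G N : Type*} (C : ICtx K G N)

def Occ (α : PExpS K G N) : Prop := vT C.v (.bdto (α.s (.key C.k0)) (.key C.k0))
def Pin (α : PExpS K G N) : Prop := ∃ k ∈ C.Kl, vT C.v (.bdto (.key k) α)
def SPin (α : PExpS K G N) : Prop := vT C.v (.bdto PExpS.self α)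
open Classical in
noncomputable def nameK (k : K) : PExpS K G N := if k = C.khat then PExpS.self else .key k
def good (p : PExpS K G N) : Prop := goodE C.Kl C.Gl C.Nl p

/-- The canonical denotation of an expression (relative to the current key). -/
def Dset (α : PExpS K G N) : Set K :=
  {x | ((x = C.khat ∨ x ∈ C.Kl) ∧ vT C.v (.bdto α (C.nameK x))) ∨
    (∃ Q : PExpS K G N, C.good Q ∧ vT C.v (.bdto α Q) ∧ C.Occ Q ∧ ¬ C.Pin Q ∧
      ¬ C.SPin Q ∧ x = C.witf Q)}

open Classical in
noncomputable def LI : K → N → Set K := fun k' n =>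
  if k' = C.khat ∨ k' ∈ C.Kl then C.Dset ((C.nameK k').s (.loc n))
  else if h : ∃ Q : PExpS K G N, C.good Q ∧ C.Occ Q ∧ ¬ C.Pin Q ∧ ¬ C.SPin Q ∧ k' = C.witf Q
    then C.Dset (h.choose.s (.loc n)) else ∅

def BI : G → Set K := fun g => C.Dset (.glob g)

/-- Good positions: a key together with its "name" expression. -/
def GoodPos (k' : K) (P : PExpS K G N) : Prop :=
  ((k' = C.khat ∨ k' ∈ C.Kl) ∧ P = C.nameK k') ∨
  (C.good P ∧ C.Occ P ∧ ¬ C.Pin P ∧ ¬ C.SPin P ∧ k' = C.witf P)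

lemma nameK_khat : C.nameK C.khat = PExpS.self := if_pos rfl

lemma occ_key (k : K) : C.Occ (.key k) := t_keyGlob C.HA k (.key C.k0) trivial

lemma occ_self : C.Occ PExpS.self := t_id1 C.HA (.key C.k0)

lemma occ_mono {α β : PExpS K G N} (h : vT C.v (.bdto α β)) (hβ : C.Occ β) : C.Occ α :=
  t_trans C.HA (t_lmono C.HA (.key C.k0) h) hβ

lemma occ_name (k : K) : C.Occ (C.nameK k) := by
  unfold nameK
  split
  · exact C.occ_self
  · exact C.occ_key k

lemma good_name {k : K} (hk : k = C.khat ∨ k ∈ C.Kl) : C.good (C.nameK k) := by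
  unfold nameK
  split
  · trivial
  · next hne =>
      rcases hk with rfl | hKl
      · exact absurd rfl hne
      · exact hKl

lemma dset_mono {α β : PExpS K G N} (h : vT C.v (.bdto α β)) : C.Dset β ⊆ C.Dset α := by
  intro x hx
  rcases hx with ⟨hk, hvt⟩ | ⟨Q, hg, hvt, hocc, hpin, hspin, hx⟩
  · exact Or.inl ⟨hk, t_trans C.HA h hvt⟩
  · exact Or.inr ⟨Q, hg, t_trans C.HA h hvt, hocc, hpin, hspin, hx⟩

lemma dset_congr {α β : PExpS K G N} (h : EqvV C.v α β) : C.Dset α = C.Dset β :=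
  Set.Subset.antisymm (C.dset_mono h.2) (C.dset_mono h.1)

lemma occ_of_mem {α : PExpS K G N} {x : K} (hx : x ∈ C.Dset α) : C.Occ α := by
  rcases hx with ⟨hk, hvt⟩ | ⟨Q, hg, hvt, hocc, hpin, hspin, hx⟩
  · exact C.occ_mono hvt (C.occ_name x)
  · exact C.occ_mono hvt hocc

lemma self_khat (h : C.khat ∈ C.Kl) : vT C.v (.bdto PExpS.self (.key C.khat)) :=
  t_nonempD C.HA C.occ_self (C.hkh2 h)

lemma self_to_khat {k : K} (hk : k = C.khat ∨ k ∈ C.Kl)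
    (hv : vT C.v (.bdto PExpS.self (.key k))) : k = C.khat := by
  have h2 : vT C.v (.bdto (.key k) PExpS.self) := t_selfIsKey C.HA hv (C.occ_key k)
  rcases hk with rfl | hKl
  · rfl
  · exact C.hkh1 k hKl h2

lemma name_to_key {α : PExpS K G N} {k : K} (hp : k = C.khat → C.khat ∈ C.Kl)
    (h : vT C.v (.bdto α (C.nameK k))) : vT C.v (.bdto α (.key k)) := by
  unfold nameK at h
  split at h
  · next he => subst he; exact t_trans C.HA h (C.self_khat (hp rfl))
  · exact h

lemma key_to_name {α : PExpS K G N} {k : K} (hKl : k ∈ C.Kl)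
    (h : vT C.v (.bdto α (.key k))) : vT C.v (.bdto α (C.nameK k)) := by
  unfold nameK
  split
  · next he => subst he; exact t_trans C.HA h (C.hkh2 hKl)
  · exact h

lemma key_left_to_name_left {k : K} {Q : PExpS K G N} (hKl : k ∈ C.Kl)
    (h : vT C.v (.bdto (.key k) Q)) : vT C.v (.bdto (C.nameK k) Q) := by
  unfold nameK
  split
  · next he => subst he; exact t_trans C.HA (C.self_khat hKl) h
  · exact h

lemma dset_name {k : K} (hk : k = C.khat ∨ k ∈ C.Kl) : C.Dset (C.nameK k) = {k} := by
  ext x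
  rw [Set.mem_singleton_iff]
  constructor
  · rintro (⟨hx, hvt⟩ | ⟨Q, hg, hvt, hocc, hpin, hspin, rfl⟩)
    · by_cases hxk : x = C.khat
      · subst hxk
        rw [C.nameK_khat] at hvt
        by_cases hkk : k = C.khat
        · exact hkk.symm
        · exfalso
          rcases hk with rfl | hKl
          · exact hkk rfl
          · rw [show C.nameK k = .key k from if_neg hkk] at hvt
            exact hkk (C.hkh1 k hKl hvt)
      · have hxKl : x ∈ C.Kl := by rcases hx with rfl | h; exact absurd rfl hxk; exact h
        rw [show C.nameK x = .key x from if_neg hxk] at hvt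
        by_cases hkk : k = C.khat
        · subst hkk
          rw [C.nameK_khat] at hvt
          exact absurd (C.self_to_khat (Or.inr hxKl) hvt) hxk
        · rw [show C.nameK k = .key k from if_neg hkk] at hvt
          by_contra hne
          exact t_keyDist C.HA (fun hc => hne hc.symm) hvt
    · exfalso
      by_cases hkk : k = C.khat
      · subst hkk
        rw [C.nameK_khat] at hvt
        exact hspin hvt
      · rw [show C.nameK k = .key k from if_neg hkk] at hvt
        rcases hk with rfl | hKl
        · exact hkk rfl
        · exact hpin ⟨k, hKl, hvt⟩
  · rintro rfl
    exact Or.inl ⟨hk, t_refl C.HA _⟩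

lemma goodpos_occ {k' : K} {P : PExpS K G N} (h : C.GoodPos k' P) : C.Occ P := by
  rcases h with ⟨hk, rfl⟩ | ⟨-, hocc, -⟩
  · exact C.occ_name k'
  · exact hocc

lemma goodpos_good {k' : K} {P : PExpS K G N} (h : C.GoodPos k' P) : C.good P := by
  rcases h with ⟨hk, rfl⟩ | ⟨hg, -⟩
  · exact C.good_name hk
  · exact hg

end ICtx

namespace ICtx

variable {K G N : Type*} (C : ICtx K G N)

/-- Truth lemma for principal expressions, infinite case. -/
theorem TL1 (w : WorldS K G N) (hbeta : w.beta = C.BI) :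
    ∀ e : PExpS K G N, C.good e → ¬ Selfy e → ∀ (k' : K) (P : PExpS K G N),
      C.GoodPos k' P → interpS w C.LI e k' = C.Dset (P.s e) := by
  intro e
  induction e with
  | key k₂ =>
      intro hg _ k' P hpos
      have hk₂ : k₂ ∈ C.Kl := hg
      have hocc : C.Occ P := C.goodpos_occ hpos
      ext x
      rw [interpS_key, Set.mem_singleton_iff]
      constructor
      · rintro rfl
        refine Or.inl ⟨Or.inr hk₂, ?_⟩
        exact C.key_to_name hk₂ (t_glob C.HA (.key x) trivial hocc)
      · intro hx
        rcases hx with ⟨hxk, hvt⟩ | ⟨Q, hgQ, hvt, hoccQ, hpin, hspin, rfl⟩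
        · have hconv : vT C.v (.bdto (.key k₂) (P.s (.key k₂))) :=
            t_conv C.HA P (.key k₂) trivial
          have h2 : vT C.v (.bdto (.key k₂) (C.nameK x)) := t_trans C.HA hconv hvt
          by_cases hxk2 : x = C.khat
          · subst hxk2
            rw [C.nameK_khat] at h2
            exact (C.hkh1 k₂ hk₂ h2).symm
          · rw [show C.nameK x = .key x from if_neg hxk2] at h2
            by_contra hne
            exact t_keyDist C.HA (fun hc => hne hc.symm) h2
        · exfalso
          have hconv : vT C.v (.bdto (.key k₂) (P.s (.key k₂))) :=
            t_conv C.HA P (.key k₂) trivial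
          exact hpin ⟨k₂, hk₂, t_trans C.HA hconv hvt⟩
  | glob g =>
      intro hg _ k' P hpos
      have hocc : C.Occ P := C.goodpos_occ hpos
      rw [interpS_glob, hbeta]
      show C.Dset (.glob g) = _
      exact (C.dset_congr
        (⟨t_glob C.HA (.glob g) trivial hocc, t_conv C.HA P (.glob g) trivial⟩ :
          EqvV C.v (P.s (.glob g)) (.glob g))).symm
  | loc n =>
      intro hg _ k' P hpos
      rw [interpS_loc]
      rcases hpos with ⟨hk, rfl⟩ | ⟨hgP, hoccP, hpinP, hspinP, rfl⟩
      · show C.LI k' n = _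
        unfold ICtx.LI
        rw [if_pos hk]
      · have hneg : ¬ (C.witf P = C.khat ∨ C.witf P ∈ C.Kl) := by
          rintro (h | h)
          · exact (C.hwit1 P).2 h
          · exact (C.hwit1 P).1 h
        have hex : ∃ Q : PExpS K G N,
            C.good Q ∧ C.Occ Q ∧ ¬ C.Pin Q ∧ ¬ C.SPin Q ∧ C.witf P = C.witf Q :=
          ⟨P, hgP, hoccP, hpinP, hspinP, rfl⟩
        show C.LI (C.witf P) n = _
        unfold ICtx.LI
        rw [if_neg hneg, dif_pos hex]
        obtain ⟨hg', hocc', hpin', hspin', heq⟩ := hex.choose_spec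
        rw [C.hwit2 hex.choose P hg' hgP heq.symm]
  | self =>
      intro _ hs
      exact absurd trivial hs
  | s e₁ e₂ ih1 ih2 =>
      intro hg hs k' P hpos
      have hg' : goodE C.Kl C.Gl C.Nl e₁ ∧ goodE C.Kl C.Gl C.Nl e₂ := hg
      have hg1 : C.good e₁ := hg'.1
      have hg2 : C.good e₂ := hg'.2
      by_cases hs2 : Selfy e₂
      · have hs1 : ¬ Selfy e₁ := fun h => hs ⟨h, hs2⟩
        have hcoll : interpS w C.LI (e₁.s e₂) k' = interpS w C.LI e₁ k' := by
          ext x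
          rw [mem_interpS_s]
          constructor
          · rintro ⟨y, hy, hx⟩
            rw [selfy_interp hs2 w C.LI y] at hx
            cases hx
            exact hy
          · intro hx
            exact ⟨x, hx, by rw [selfy_interp hs2 w C.LI x]; rfl⟩
        rw [hcoll, ih1 hg1 hs1 k' P hpos]
        refine (C.dset_congr ?_).symm
        have h1 : EqvV C.v (P.s (e₁.s e₂)) ((P.s e₁).s e₂) :=
          ⟨t_assoc2 C.HA P e₁ e₂, t_assoc1 C.HA P e₁ e₂⟩
        have h2 : EqvV C.v ((P.s e₁).s e₂) (P.s e₁) := selfy_eqv C.HA hs2 (P.s e₁)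
        exact eqv_trans C.HA h1 h2
      · by_cases hs1 : Selfy e₁
        · have hcoll : interpS w C.LI (e₁.s e₂) k' = interpS w C.LI e₂ k' := by
            ext x
            rw [mem_interpS_s]
            constructor
            · rintro ⟨y, hy, hx⟩
              rw [selfy_interp hs1 w C.LI k'] at hy
              cases hy
              exact hx
            · intro hx
              exact ⟨k', by rw [selfy_interp hs1 w C.LI k']; rfl, hx⟩
          rw [hcoll, ih2 hg2 hs2 k' P hpos]
          refine (C.dset_congr ?_).symm
          have h1 : EqvV C.v (P.s (e₁.s e₂)) ((P.s e₁).s e₂) :=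
            ⟨t_assoc2 C.HA P e₁ e₂, t_assoc1 C.HA P e₁ e₂⟩
          have h2 : EqvV C.v ((P.s e₁).s e₂) (P.s e₂) :=
            eqv_cong_s C.HA e₂ (selfy_eqv C.HA hs1 P)
          exact eqv_trans C.HA h1 h2
        · have hocc : C.Occ P := C.goodpos_occ hpos
          ext x
          rw [mem_interpS_s, ih1 hg1 hs1 k' P hpos]
          constructor
          · rintro ⟨y, hy, hx⟩
            rcases hy with ⟨hyk, hyvt⟩ | ⟨Q, hgQ, hvtQ, hoccQ, hpinQ, hspinQ, rfl⟩
            · have hpos' : C.GoodPos y (C.nameK y) := Or.inl ⟨hyk, rfl⟩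
              rw [ih2 hg2 hs2 y (C.nameK y) hpos'] at hx
              refine C.dset_mono ?_ hx
              exact t_trans C.HA (t_assoc2 C.HA P e₁ e₂) (t_lmono C.HA e₂ hyvt)
            · have hpos' : C.GoodPos (C.witf Q) Q :=
                Or.inr ⟨hgQ, hoccQ, hpinQ, hspinQ, rfl⟩
              rw [ih2 hg2 hs2 _ Q hpos'] at hx
              refine C.dset_mono ?_ hx
              exact t_trans C.HA (t_assoc2 C.HA P e₁ e₂) (t_lmono C.HA e₂ hvtQ)
          · intro hx
            have h0 : C.Occ (P.s (e₁.s e₂)) := C.occ_of_mem hx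
            have heq1 : EqvV C.v ((P.s (e₁.s e₂)).s (.key C.k0))
                (((P.s e₁).s e₂).s (.key C.k0)) :=
              eqv_cong_s C.HA (.key C.k0)
                ⟨t_assoc2 C.HA P e₁ e₂, t_assoc1 C.HA P e₁ e₂⟩
            have heq2 : EqvV C.v (((P.s e₁).s e₂).s (.key C.k0))
                ((P.s e₁).s (e₂.s (.key C.k0))) :=
              ⟨t_assoc1 C.HA (P.s e₁) e₂ (.key C.k0), t_assoc2 C.HA (P.s e₁) e₂ (.key C.k0)⟩
            have h1 : vT C.v (.bdto ((P.s e₁).s (e₂.s (.key C.k0))) (.key C.k0)) :=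
              t_trans C.HA (eqv_trans C.HA heq1 heq2).2 h0
            have hocc1 : C.Occ (P.s e₁) := t_nonempC C.HA C.k0 h1
            have hx' : x ∈ C.Dset ((P.s e₁).s e₂) := by
              rw [C.dset_congr
                (⟨t_assoc1 C.HA P e₁ e₂, t_assoc2 C.HA P e₁ e₂⟩ :
                  EqvV C.v ((P.s e₁).s e₂) (P.s (e₁.s e₂)))]
              exact hx
            by_cases hpin1 : C.Pin (P.s e₁)
            · obtain ⟨k₁, hk₁Kl, hk₁⟩ := hpin1
              have hQk : vT C.v (.bdto (P.s e₁) (.key k₁)) := t_nonempD C.HA hocc1 hk₁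
              refine ⟨k₁, Or.inl ⟨Or.inr hk₁Kl, C.key_to_name hk₁Kl hQk⟩, ?_⟩
              have hpos' : C.GoodPos k₁ (C.nameK k₁) := Or.inl ⟨Or.inr hk₁Kl, rfl⟩
              rw [ih2 hg2 hs2 k₁ _ hpos']
              refine C.dset_mono ?_ hx'
              exact t_lmono C.HA e₂ (C.key_left_to_name_left hk₁Kl hk₁)
            · by_cases hspin1 : C.SPin (P.s e₁)
              · have hks : vT C.v (.bdto (P.s e₁) PExpS.self) :=
                  t_selfIsKey C.HA hspin1 hocc1
                refine ⟨C.khat, Or.inl ⟨Or.inl rfl, by rw [C.nameK_khat]; exact hks⟩, ?_⟩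
                have hpos' : C.GoodPos C.khat (C.nameK C.khat) := Or.inl ⟨Or.inl rfl, rfl⟩
                rw [ih2 hg2 hs2 C.khat _ hpos', C.nameK_khat]
                refine C.dset_mono ?_ hx'
                exact t_lmono C.HA e₂ hspin1
              · have hgP : C.good P := C.goodpos_good hpos
                have hgPe : C.good (P.s e₁) := ⟨hgP, hg1⟩
                refine ⟨C.witf (P.s e₁),
                  Or.inr ⟨P.s e₁, hgPe, t_refl C.HA _, hocc1, hpin1, hspin1, rfl⟩, ?_⟩
                have hpos' : C.GoodPos (C.witf (P.s e₁)) (P.s e₁) :=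
                  Or.inr ⟨hgPe, hocc1, hpin1, hspin1, rfl⟩
                rw [ih2 hg2 hs2 _ _ hpos']
                exact hx'

end ICtx

namespace ICtx

variable {K G N : Type*} (C : ICtx K G N)

theorem TLtop (w : WorldS K G N) (hbeta : w.beta = C.BI) (p : PExpS K G N) (hp : C.good p) :
    interpS w C.LI p C.khat = C.Dset p := by
  by_cases hs : Selfy p
  · rw [selfy_interp hs w C.LI C.khat]
    have h1 : C.Dset p = C.Dset PExpS.self := C.dset_congr (selfy_eqv_self C.HA hs)
    have h2 : C.Dset PExpS.self = {C.khat} := by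
      have h3 := C.dset_name (k := C.khat) (Or.inl rfl)
      rwa [C.nameK_khat] at h3
    rw [h1, h2]
  · have hpos : C.GoodPos C.khat PExpS.self := Or.inl ⟨Or.inl rfl, (C.nameK_khat).symm⟩
    rw [C.TL1 w hbeta p hp hs C.khat PExpS.self hpos]
    exact C.dset_congr ⟨t_id1 C.HA p, t_id2 C.HA p⟩

/-- Truth lemma for formulas, infinite case. -/
theorem TLF (w : WorldS K G N) (hbeta : w.beta = C.BI) (φ : FmlS K G N)
    (hcerts : w.certs = canonCerts C.v φ) :
    ∀ ψ : FmlS K G N, goodF C.Kl C.Gl C.Nl ψ → (∀ χ ∈ subFml ψ, χ ∈ subFml φ) →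
      (SatS w C.LI C.khat ψ ↔ vT C.v ψ) := by
  intro ψ
  induction ψ with
  | bdto p q =>
      intro hgψ hsub
      have hg' : goodE C.Kl C.Gl C.Nl p ∧ goodE C.Kl C.Gl C.Nl q := hgψ
      have hgp : C.good p := hg'.1
      have hgq : C.good q := hg'.2
      rw [SatS_bdto, C.TLtop w hbeta p hgp, C.TLtop w hbeta q hgq]
      constructor
      · intro hsubset
        by_contra hn
        have occq : C.Occ q := t_nonempB C.HA C.k0 hn
        by_cases hpin : C.Pin q
        · obtain ⟨k₁, hKl, hk₁⟩ := hpin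
          have h1 : k₁ ∈ C.Dset q :=
            Or.inl ⟨Or.inr hKl, C.key_to_name hKl (t_nonempD C.HA occq hk₁)⟩
          rcases hsubset h1 with ⟨-, hvt⟩ | ⟨Q, -, -, -, -, -, heq⟩
          · have h3 : vT C.v (.bdto p (.key k₁)) :=
              C.name_to_key (fun he => he ▸ hKl) hvt
            exact hn (t_trans C.HA h3 hk₁)
          · exact (C.hwit1 Q).1 (heq ▸ hKl)
        · by_cases hspin : C.SPin q
          · have h1 : C.khat ∈ C.Dset q :=
              Or.inl ⟨Or.inl rfl, by rw [C.nameK_khat]; exact t_selfIsKey C.HA hspin occq⟩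
            rcases hsubset h1 with ⟨-, hvt⟩ | ⟨Q, -, -, -, -, -, heq⟩
            · rw [C.nameK_khat] at hvt
              exact hn (t_trans C.HA hvt hspin)
            · exact (C.hwit1 Q).2 heq.symm
          · have h1 : C.witf q ∈ C.Dset q :=
              Or.inr ⟨q, hgq, t_refl C.HA q, occq, hpin, hspin, rfl⟩
            rcases hsubset h1 with ⟨hk, -⟩ | ⟨Q, hgQ, hvt, -, -, -, heq⟩
            · rcases hk with he | hKl
              · exact (C.hwit1 q).2 he
              · exact (C.hwit1 q).1 hKl
            · have hQq : Q = q := C.hwit2 Q q hgQ hgq heq.symm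
              exact hn (hQq ▸ hvt)
      · intro hvt
        exact C.dset_mono hvt
  | cert k' χ ih =>
      intro hgψ hsub
      rw [SatS_cert, hcerts]
      show (FmlS.cert k' χ ∈ subFml φ ∧ vT C.v (.cert k' χ)) ↔ _
      have hm : FmlS.cert k' χ ∈ subFml φ := hsub _ (mem_subFml_self _)
      exact ⟨fun h => h.2, fun h => ⟨hm, h⟩⟩
  | not χ ih =>
      intro hgψ hsub
      rw [SatS_not, vT_not, ih hgψ (fun χ' h => hsub χ' (List.mem_cons_of_mem _ h))]
  | and χ₁ χ₂ ih1 ih2 =>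
      intro hgψ hsub
      have hg' : goodF C.Kl C.Gl C.Nl χ₁ ∧ goodF C.Kl C.Gl C.Nl χ₂ := hgψ
      rw [SatS_and, vT_and,
        ih1 hg'.1 (fun χ' h => hsub χ' (List.mem_cons_of_mem _ (List.mem_append_left _ h))),
        ih2 hg'.2 (fun χ' h => hsub χ' (List.mem_cons_of_mem _ (List.mem_append_right _ h)))]

/-- Consistency of the canonical assignment, infinite case. -/
theorem consistentI (w : WorldS K G N) (hbeta : w.beta = C.BI) (φ : FmlS K G N)
    (hcerts : w.certs = canonCerts C.v φ) (hgφ : goodF C.Kl C.Gl C.Nl φ) :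
    ConsistentS w C.LI := by
  intro k' n p hmem
  rw [hcerts] at hmem
  obtain ⟨hsf, hvt⟩ := hmem
  have hgood : goodF C.Kl C.Gl C.Nl (.cert k' (.bdto (.loc n) p)) := goodF_sub φ _ hsf hgφ
  have hgood' : k' ∈ C.Kl ∧ goodF C.Kl C.Gl C.Nl (.bdto (.loc n) p) := hgood
  have hk'Kl : k' ∈ C.Kl := hgood'.1
  have hgood'' : goodE C.Kl C.Gl C.Nl (.loc n) ∧ goodE C.Kl C.Gl C.Nl p := hgood'.2
  have hgp : C.good p := hgood''.2
  show interpS w C.LI p k' ⊆ interpS w C.LI (.loc n) k'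
  have hlink : vT C.v (.bdto ((PExpS.key k').s (.loc n)) ((PExpS.key k').s p)) :=
    t_keyLink C.HA hvt
  have heqv : EqvV C.v (.key k') (C.nameK k') := by
    unfold nameK
    split
    · next he => subst he; exact ⟨C.hkh2 hk'Kl, C.self_khat hk'Kl⟩
    · exact eqv_refl C.HA _
  have hlink' : vT C.v (.bdto ((C.nameK k').s (.loc n)) ((C.nameK k').s p)) :=
    t_trans C.HA (eqv_cong_s C.HA (.loc n) heqv).2
      (t_trans C.HA hlink (eqv_cong_s C.HA p heqv).1)
  have hLI : interpS w C.LI (.loc n) k' = C.Dset ((C.nameK k').s (.loc n)) := by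
    rw [interpS_loc]
    show C.LI k' n = _
    unfold ICtx.LI
    rw [if_pos (Or.inr hk'Kl)]
  rw [hLI]
  by_cases hs : Selfy p
  · rw [selfy_interp hs w C.LI k']
    intro x hx
    cases hx
    have h2 : vT C.v (.bdto ((C.nameK k').s (.loc n)) (C.nameK k')) :=
      t_trans C.HA hlink' (selfy_eqv C.HA hs (C.nameK k')).1
    refine C.dset_mono h2 ?_
    rw [C.dset_name (Or.inr hk'Kl)]
    rfl
  · have hpos : C.GoodPos k' (C.nameK k') := Or.inl ⟨Or.inr hk'Kl, rfl⟩
    rw [C.TL1 w hbeta p hgp hs k' _ hpos]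
    exact C.dset_mono hlink'

end ICtx

/-- Completeness, infinite case. -/
theorem complete_inf [Nonempty K] [Infinite K] {φ : FmlS K G N} (h : ¬ PrvSInf φ) :
    ¬ OValidS φ := by
  classical
  obtain ⟨v, Hv, hvφ⟩ := exists_valuation (K := K) (G := G) (N := N) PrvSInf
    (fun ht => .taut ht) (fun h1 h2 => .mp h1 h2) h
  have HA : ∀ ψ : FmlS K G N, PrvSInf ψ → vT v ψ := Hv
  obtain ⟨khat, hkh1, hkh2⟩ : ∃ khat : K,
      (∀ k ∈ keysF φ, vT v (.bdto (.key k) PExpS.self) → k = khat) ∧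
      (khat ∈ keysF φ → vT v (.bdto (.key khat) PExpS.self)) := by
    by_cases hpin : ∃ k ∈ keysF φ, vT v (.bdto (.key k) PExpS.self)
    · obtain ⟨k₁, hk₁, hv₁⟩ := hpin
      refine ⟨k₁, ?_, fun _ => hv₁⟩
      intro k hk hvk
      have hs1 : vT v (.bdto PExpS.self (.key k₁)) :=
        t_nonempD HA (t_id1 HA (.key k₁)) hv₁
      have h2 : vT v (.bdto (.key k) (.key k₁)) := t_trans HA hvk hs1
      by_contra hne
      exact t_keyDist HA hne h2
    · have hinf : ({x | x ∈ keysF φ} : Set K)ᶜ.Infinite :=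
        Set.Finite.infinite_compl (List.finite_toSet (keysF φ))
      obtain ⟨khat, hkhat⟩ := hinf.nonempty
      have hnot : khat ∉ keysF φ := hkhat
      exact ⟨khat, fun k hk hvk => absurd ⟨k, hk, hvk⟩ hpin, fun hc => absurd hc hnot⟩
  have hSinf : ({k : K | k ∉ keysF φ ∧ k ≠ khat}).Infinite := by
    have heq : {k : K | k ∉ keysF φ ∧ k ≠ khat} = ({x | x ∈ keysF φ} ∪ {khat} : Set K)ᶜ := by
      ext x
      simp [and_comm]
    rw [heq]
    exact Set.Finite.infinite_compl
      ((List.finite_toSet (keysF φ)).union (Set.finite_singleton khat))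
  let emb := hSinf.natEmbedding
  let witf : PExpS K G N → K := fun Q => (emb (encE (keysF φ) (globsF φ) (locsF φ) Q) : K)
  have hwit1 : ∀ Q : PExpS K G N, witf Q ∉ keysF φ ∧ witf Q ≠ khat := fun Q =>
    (emb (encE (keysF φ) (globsF φ) (locsF φ) Q)).2
  have hwit2 : ∀ Q R : PExpS K G N, goodE (keysF φ) (globsF φ) (locsF φ) Q →
      goodE (keysF φ) (globsF φ) (locsF φ) R → witf Q = witf R → Q = R := by
    intro Q R hQ hR heq
    have h1 : emb (encE (keysF φ) (globsF φ) (locsF φ) Q)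
        = emb (encE (keysF φ) (globsF φ) (locsF φ) R) := Subtype.coe_injective heq
    exact encE_inj _ _ _ Q R hQ hR (emb.injective h1)
  let C : ICtx K G N :=
    ⟨v, keysF φ, globsF φ, locsF φ, khat, witf, Classical.arbitrary K,
      Hv, hwit1, hwit2, hkh1, hkh2⟩
  let w : WorldS K G N := ⟨C.BI, canonCerts v φ, canonCerts_finite v φ⟩
  intro hov
  apply hov
  refine ⟨w, C.LI, khat, ?_, ?_⟩
  · rw [SatS_not]
    have htl := C.TLF w rfl φ rfl φ (goodF_self φ) (fun χ hχ => hχ)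
    rw [show C.khat = khat from rfl] at htl
    rw [htl]
    intro hc
    rw [vT, hvφ] at hc
    exact absurd hc (by simp)
  · exact C.consistentI w rfl φ rfl (goodF_self φ)

/-- Theorem 6.1: `AX_inf^self` (for infinite `K`) and
`AX_fin^self` (for finite `K`) are sound and complete for LLNC^self with
respect to the open semantics. -/
theorem axSelf_sound_complete [Nonempty K] (φ : FmlS K G N) :
    (Infinite K → (PrvSInf φ ↔ OValidS φ)) ∧
    (Finite K → (PrvSFin φ ↔ OValidS φ)) := by
  constructor
  · intro hK
    haveI := hK
    constructor
    · intro hp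
      rintro ⟨w, l, k, hsat, hcons⟩
      exact (SatS_not.mp hsat) (sound_fin (inf_to_fin hp) w l k hcons)
    · intro hov
      by_contra hnp
      exact complete_inf hnp hov
  · intro hK
    haveI := hK
    constructor
    · intro hp
      rintro ⟨w, l, k, hsat, hcons⟩
      exact (SatS_not.mp hsat) (sound_fin hp w l k hcons)
    · intro hov
      by_contra hnp
      exact complete_fin hnp hov
end
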